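/- arXiv:math/0006154 — 7 statements merged into one kernel-verified Lean document; each statement's English description precedes it below -/
import Mathlib

section
/- Let $V$ be a real vector space with basis $e_1,\ldots,e_n,e^1_1,\ldots,e^s_n$ and define $\omega_j = \sum_{i=1}^n e_i^* \wedge (e^j_i)^*$ for $j=1,\ldots,s$. Then for any multi-index $H=(h_1,\ldots,h_s)$ of non-negative integers with $h_1+\cdots+h_s > n$, the wedge product $\omega_1^{\wedge h_1}\wedge\cdots\wedge \omega_s^{\wedge h_s} = 0$. -/
set_option maxHeartbeats 1000000
set_option synthInstance.maxHeartbeats 400000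

noncomputable section

abbrev Idx (n s : ℕ) := Fin n ⊕ (Fin n × Fin s)

abbrev Vns (n s : ℕ) := Idx n s → ℝ

def bV (n s : ℕ) : Module.Basis (Idx n s) ℝ (Vns n s) := Pi.basisFun ℝ _

/-- The polysymplectic 2-forms `ω j = ∑ i, e_i^* ∧ (e^j_i)^*`. -/
def om (n s : ℕ) (j : Fin s) : ExteriorAlgebra ℝ (Vns n s) :=
  ∑ i : Fin n,
    ExteriorAlgebra.ι ℝ (bV n s (Sum.inl i)) * ExteriorAlgebra.ι ℝ (bV n s (Sum.inr (i, j)))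

namespace Stmt0Aux

variable (n s : ℕ)

open ExteriorAlgebra

/-- The degree-2 generators `c (i,j) = e_i^* ∧ (e^j_i)^*`. -/
def c (p : Fin n × Fin s) : ExteriorAlgebra ℝ (Vns n s) :=
  ι ℝ (bV n s (Sum.inl p.1)) * ι ℝ (bV n s (Sum.inr p))

lemma swap (x y : Vns n s) : ι ℝ x * ι ℝ y = -(ι ℝ y * ι ℝ x) :=
  eq_neg_of_add_eq_zero_left (ι_add_mul_swap (R := ℝ) x y)

lemma key (u v : Vns n s) (t : ExteriorAlgebra ℝ (Vns n s)) :
    ι ℝ u * (ι ℝ v * t) = -(ι ℝ v * (ι ℝ u * t)) := by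
  rw [← mul_assoc, ← mul_assoc, swap n s u v, neg_mul]

lemma comm2 (x y z w : Vns n s) :
    (ι ℝ x * ι ℝ y) * (ι ℝ z * ι ℝ w) = (ι ℝ z * ι ℝ w) * (ι ℝ x * ι ℝ y) := by
  simp only [mul_assoc]
  rw [key n s y z (ι ℝ w), mul_neg, key n s x z, neg_neg]
  congr 1
  rw [swap n s y w, mul_neg, key n s x w, neg_neg]

lemma c_comm (p q : Fin n × Fin s) : c n s p * c n s q = c n s q * c n s p :=
  comm2 n s _ _ _ _

lemma c_zero (i : Fin n) (j j' : Fin s) : c n s (i, j) * c n s (i, j') = 0 := by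
  unfold c
  dsimp only
  simp only [mul_assoc]
  rw [key n s (bV n s (Sum.inl i)) (bV n s (Sum.inr (i, j))),
    ← mul_assoc (ι ℝ (bV n s (Sum.inl i))), ι_sq_zero, zero_mul, mul_zero, neg_zero]

/-- The (commutative) subalgebra generated by the `c (i,j)`. -/
def S : Subalgebra ℝ (ExteriorAlgebra ℝ (Vns n s)) :=
  Algebra.adjoin ℝ (Set.range (c n s))

instance : CommRing (S n s) :=
  Algebra.adjoinCommRingOfComm ℝ (by
    rintro a ⟨p, rfl⟩ b ⟨q, rfl⟩
    exact c_comm n s p q)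

def C (p : Fin n × Fin s) : S n s := ⟨c n s p, Algebra.subset_adjoin ⟨p, rfl⟩⟩

lemma C_zero (i : Fin n) (j j' : Fin s) : C n s (i, j) * C n s (i, j') = 0 :=
  Subtype.ext (c_zero n s i j j')

def Ω (j : Fin s) : S n s := ∑ i : Fin n, C n s (i, j)

lemma coe_Ω (j : Fin s) : ((Ω n s j : ExteriorAlgebra ℝ (Vns n s))) = om n s j := by
  simp [Ω, om, C, c]

end Stmt0Aux

open Stmt0Aux in
theorem stmt0 (n s : ℕ) (h : Fin s → ℕ) (hsum : n < ∑ j, h j) :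
    (List.ofFn fun j : Fin s => om n s j ^ h j).prod = 0 := by
  classical
  suffices hS : (List.ofFn fun j : Fin s => Ω n s j ^ h j).prod = 0 by
    have h2 := congrArg (Subalgebra.val (S n s)) hS
    rw [map_list_prod, List.map_ofFn] at h2
    have he : (Subalgebra.val (S n s)) ∘ (fun j => Ω n s j ^ h j)
        = fun j : Fin s => om n s j ^ h j := by
      funext j
      simp [Function.comp, map_pow, coe_Ω]
    rw [he] at h2
    simpa using h2
  erw [List.prod_ofFn]
  have hsig : (∏ j, Ω n s j ^ h j) = ∏ p : (Σ j : Fin s, Fin (h j)), Ω n s p.1 := by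
    rw [← Finset.univ_sigma_univ, Finset.prod_sigma]
    simp
  rw [hsig]
  have hexp : (∏ p : (Σ j : Fin s, Fin (h j)), Ω n s p.1)
      = ∑ g ∈ Fintype.piFinset
          (fun _ : (Σ j : Fin s, Fin (h j)) => (Finset.univ : Finset (Fin n))),
          ∏ p : (Σ j : Fin s, Fin (h j)), C n s (g p, p.1) := by
    simp only [Ω]; exact Finset.prod_univ_sum
      (fun _ : (Σ j : Fin s, Fin (h j)) => (Finset.univ : Finset (Fin n)))
      (fun p i => C n s (i, p.1))
  rw [hexp]
  apply Finset.sum_eq_zero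
  intro g _
  have hcard : Fintype.card (Fin n) < Fintype.card (Σ j : Fin s, Fin (h j)) := by
    simpa using hsum
  obtain ⟨p, q, hpq, heq⟩ := Fintype.exists_ne_map_eq_of_card_lt g hcard
  have hq : q ∈ (Finset.univ : Finset (Σ j : Fin s, Fin (h j))).erase p :=
    Finset.mem_erase.mpr ⟨fun hh => hpq hh.symm, Finset.mem_univ q⟩
  erw [← Finset.mul_prod_erase _ _ (Finset.mem_univ p), ← Finset.mul_prod_erase _ _ hq,
    ← mul_assoc, heq, C_zero, zero_mul]
end
end

section
/- Let $V$ be a real vector space with basis $e_1,\ldots,e_n,e^1_1,\ldots,e^s_n$ and define $\omega_j = \sum_{i=1}^n e_i^* \wedge (e^j_i)^*$ for $j=1,\ldots,s$. Then the forms $\omega_1^{\wedge h_1}\wedge\cdots\wedge \omega_s^{\wedge h_s}$, as $(h_1,\ldots,h_s)$ ranges over all $s$-tuples of non-negative integers with $h_1+\cdots+h_s = n$, are linearly independent in $\bigwedge^{2n} V^*$. -/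
/-!
STATEMENT 1: The forms `ω_1^{h_1} ∧ ⋯ ∧ ω_s^{h_s}`, as `(h_1,…,h_s)` ranges over the
`s`-tuples of non-negative integers with `h_1 + ⋯ + h_s = n`, are linearly independent
(in the exterior algebra of `V = ℝ^{n(s+1)}`, inside degree `2n`).
-/

noncomputable section

namespace Stmt1

open ExteriorAlgebra Finset

variable {n s : ℕ}

def enc (m : ℕ) : Fin m × Fin 2 ≃ Fin (2 * m) where
  toFun p := ⟨2 * p.1.1 + p.2.1, by obtain ⟨⟨i, hi⟩, ⟨t, ht⟩⟩ := p; simp only []; omega⟩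
  invFun c := (⟨c.1 / 2, by omega⟩, ⟨c.1 % 2, by omega⟩)
  left_inv := by rintro ⟨⟨i, hi⟩, ⟨t, ht⟩⟩; refine Prod.ext (Fin.ext ?_) (Fin.ext ?_) <;> simp <;> omega
  right_inv := by rintro ⟨c, hc⟩; exact Fin.ext (by simp; omega)

def J (g : Fin n → Fin n) (w : Fin n → Fin s) (p : Fin n × Fin 2) : Idx n s :=
  if p.2 = 0 then Sum.inl (g p.1) else Sum.inr (g p.1, w p.1)

lemma J_inj (f : Fin n → Fin s) : Function.Injective (J id f) := by
  rintro ⟨i, t⟩ ⟨i', t'⟩ h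
  unfold J at h
  fin_cases t <;> fin_cases t' <;> simp_all

lemma bV_apply (m m' : Idx n s) : bV n s m m' = if m' = m then 1 else 0 := by
  simp [bV, Pi.basisFun_apply, Pi.single_apply]

lemma iotaMulti_succ (m : ℕ) (v : Fin (m + 1) → Vns n s) :
    ιMulti ℝ (m + 1) v = ι ℝ (v 0) * ιMulti ℝ m (fun i => v i.succ) := by
  rw [ιMulti_apply, ιMulti_apply, List.ofFn_succ, List.prod_cons]

def pvec {m : ℕ} (a b : Fin m → Vns n s) : Fin m × Fin 2 → Vns n s :=
  fun p => if p.2 = 0 then a p.1 else b p.1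

lemma interleave : ∀ (m : ℕ) (a b : Fin m → Vns n s),
    (List.ofFn fun k => ι ℝ (a k) * ι ℝ (b k)).prod
      = ιMulti ℝ (2 * m) (fun c => pvec a b ((enc m).symm c))
  | 0, a, b => by
      simp [ιMulti_apply, List.ofFn_zero]
  | (m + 1), a, b => by
      rw [List.ofFn_succ, List.prod_cons,
        interleave m (fun k => a k.succ) (fun k => b k.succ)]
      rw [mul_assoc]
      show _ = ιMulti ℝ ((2 * m + 1) + 1) (fun c => pvec a b ((enc (m+1)).symm c))
      rw [iotaMulti_succ, iotaMulti_succ]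
      congr 1
      · congr 1
        simp [pvec, enc]
      congr 1
      · congr 1
        simp [pvec, enc, Fin.val_succ]
        exact congrArg b (Fin.ext (by simp only [Fin.val_zero]; rw [Nat.mod_eq_of_lt (by omega)]))
      congr 1
      funext c
      obtain ⟨c, hc⟩ := c
      simp only [pvec, enc, Equiv.coe_fn_symm_mk, Fin.val_succ]
      have hmod : (c + 1 + 1) % 2 = c % 2 := by omega
      have hdiv : (c + 1 + 1) / 2 = c / 2 + 1 := by omega
      have fzero : ∀ (x : ℕ) (hx : x < 2), ((⟨x, hx⟩ : Fin 2) = 0) ↔ x = 0 := by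
        intro x hx; rw [Fin.ext_iff]; simp
      by_cases h : c % 2 = 0
      · simp only [fzero, hmod, h, eq_self_iff_true, if_true, if_false, ↓reduceIte]
        exact congrArg a (Fin.ext (by simp only [Fin.val_succ]; omega))
      · simp only [fzero, hmod, h, if_true, if_false, ↓reduceIte]
        exact congrArg b (Fin.ext (by simp only [Fin.val_succ]; omega))


def idx (f : Fin n → Fin s) : Fin (2 * n) → Idx n s := fun c => J id f ((enc n).symm c)

def F (f : Fin n → Fin s) : (Vns n s) [⋀^Fin (2 * n)]→ₗ[ℝ] ℝ :=
  (Matrix.detRowAlternating).compLinearMap (LinearMap.funLeft ℝ ℝ (idx f))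

def Pfam (f : Fin n → Fin s) : ∀ i, (Vns n s) [⋀^Fin i]→ₗ[ℝ] ℝ := fun i =>
  if h : i = 2 * n then (F f).domDomCongr (finCongr h.symm) else 0

def φ (f : Fin n → Fin s) : ExteriorAlgebra ℝ (Vns n s) →ₗ[ℝ] ℝ :=
  ExteriorAlgebra.liftAlternating (Pfam f)

lemma phi_iotaMulti (f : Fin n → Fin s) (u : Fin (2 * n) → Vns n s) :
    φ f (ιMulti ℝ (2 * n) u) = Matrix.det (Matrix.of fun r c => u r (idx f c)) := by
  rw [φ, liftAlternating_apply_ιMulti]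
  rw [Pfam, dif_pos rfl]
  simp only [finCongr_refl, AlternatingMap.domDomCongr_refl]
  rfl

lemma J_gw (g : Fin n → Fin n) (w : Fin n → Fin s) (i : Fin n) :
    J g w (i, 0) = Sum.inl (g i) ∧ J g w (i, 1) = Sum.inr (g i, w i) := by
  constructor <;> simp [J]

lemma det_term (f w : Fin n → Fin s) (g : Fin n → Fin n) :
    Matrix.det (Matrix.of fun r c : Fin (2 * n) =>
        bV n s (J g w ((enc n).symm r)) (idx f c))
      = if Function.Injective g ∧ f ∘ g = w then 1 else 0 := by
  classical
  by_cases hg : Function.Injective g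
  · by_cases hfg : f ∘ g = w
    · rw [if_pos ⟨hg, hfg⟩]
      have hbij : Function.Bijective g := Finite.injective_iff_bijective.mp hg
      set gperm : Equiv.Perm (Fin n) := Equiv.ofBijective g hbij with hgdef
      set π : Equiv.Perm (Fin n × Fin 2) := Equiv.prodCongrLeft (fun _ : Fin 2 => gperm) with hπ
      set σ : Equiv.Perm (Fin (2 * n)) := (enc n).permCongr π with hσ
      have hgv : ∀ i, gperm i = g i := fun i => rfl
      have hJ : ∀ p : Fin n × Fin 2, J g w p = J id f (π p) := by
        rintro ⟨i, t⟩
        have : π (i, t) = (gperm i, t) := Equiv.prodCongrLeft_apply _ _ _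
        rw [this]
        have hw : f (g i) = w i := congrFun hfg i
        unfold J
        by_cases ht : t = 0
        · simp [ht, hgv]
        · simp [ht, hgv, hw]
      have hcond : ∀ r c : Fin (2 * n),
          (idx f c = J g w ((enc n).symm r)) ↔ (σ r = c) := by
        intro r c
        rw [hJ]
        show J id f ((enc n).symm c) = J id f (π ((enc n).symm r)) ↔ _
        rw [(J_inj f).eq_iff, hσ, Equiv.permCongr_apply, Equiv.symm_apply_eq]
        exact ⟨fun h => h.symm, fun h => h.symm⟩
      have hM : (Matrix.of fun r c : Fin (2 * n) =>
          bV n s (J g w ((enc n).symm r)) (idx f c)) = σ.permMatrix ℝ := by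
        ext r c
        rw [Matrix.of_apply, bV_apply]
        rw [if_congr (hcond r c) rfl rfl]
        simp [Equiv.Perm.permMatrix, PEquiv.toMatrix_apply, Equiv.toPEquiv_apply]
      rw [hM, Matrix.det_permutation]
      have hsign : Equiv.Perm.sign σ = 1 := by
        rw [hσ, Equiv.Perm.sign_permCongr, hπ, Equiv.Perm.sign_prodCongrLeft]
        rw [Finset.prod_const]
        simp [Int.units_sq]
      rw [hsign]
      simp
    · rw [if_neg (fun h => hfg h.2)]
      obtain ⟨k, hk⟩ := Function.ne_iff.mp hfg
      apply Matrix.det_eq_zero_of_row_eq_zero (enc n (k, 1))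
      intro c
      rw [Matrix.of_apply, Equiv.symm_apply_apply, bV_apply, if_neg]
      rw [(J_gw g w k).2]
      show ¬ (J id f ((enc n).symm c) = _)
      obtain ⟨i, t⟩ := (enc n).symm c
      unfold J
      by_cases ht : t = 0
      · simp [ht]
      · simp only [ht, if_neg ht, id_eq]
        intro hh
        have hh' : (i, f i) = (g k, w k) := Sum.inr_injective hh
        have h1 : i = g k := congrArg Prod.fst hh'
        have h2 : f i = w k := congrArg Prod.snd hh'
        exact hk (by rw [Function.comp_apply, ← h1, h2])
  · rw [if_neg (fun h => hg h.1)]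
    rw [Function.not_injective_iff] at hg
    obtain ⟨k, k', hgk, hkk'⟩ := hg
    apply Matrix.det_zero_of_row_eq (i := enc n (k, 0)) (j := enc n (k', 0))
    · intro hh
      exact hkk' (congrArg Prod.fst ((enc n).injective hh))
    · funext c
      rw [Matrix.of_apply, Matrix.of_apply, Equiv.symm_apply_apply, Equiv.symm_apply_apply,
        (J_gw g w k).1, (J_gw g w k').1, hgk]

def xel (i : Fin n) (j : Fin s) : ExteriorAlgebra ℝ (Vns n s) :=
  ExteriorAlgebra.ι ℝ (bV n s (Sum.inl i)) * ExteriorAlgebra.ι ℝ (bV n s (Sum.inr (i, j)))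

lemma om_eq (j : Fin s) : om n s j = ∑ i : Fin n, xel i j := rfl

set_option maxRecDepth 10000 in
lemma expand : ∀ (m : ℕ) (w : Fin m → Fin s),
    (List.ofFn fun k => om n s (w k)).prod
      = ∑ g : Fin m → Fin n, (List.ofFn fun k => xel (g k) (w k)).prod
  | 0, w => by
      have hcard : (Finset.univ : Finset (Fin 0 → Fin n)).card = 1 := by
        simp [Finset.card_univ]
      simp [List.ofFn_zero, Finset.sum_const, hcard]
  | (m + 1), w => by
      rw [List.ofFn_succ, List.prod_cons, expand m (fun k => w k.succ), om_eq,
        Finset.sum_mul_sum]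
      rw [← Equiv.sum_comp (Fin.consEquiv (fun _ : Fin (m + 1) => Fin n))
            (fun g => (List.ofFn fun k => xel (g k) (w k)).prod)]
      rw [Fintype.sum_prod_type]
      refine Finset.sum_congr rfl fun i _ => Finset.sum_congr rfl fun g _ => ?_
      rw [List.ofFn_succ, List.prod_cons]
      simp only [Fin.consEquiv_apply, Fin.cons_zero, Fin.cons_succ]

lemma count_ofFn : ∀ (m : ℕ) (v : Fin m → Fin s) (a : Fin s),
    (List.ofFn v).count a = (Finset.univ.filter fun k => v k = a).card
  | 0, v, a => by simp
  | m + 1, v, a => by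
      rw [List.ofFn_succ, List.count_cons, count_ofFn m (fun k => v k.succ) a]
      rw [Finset.card_filter, Finset.card_filter, Fin.sum_univ_succ]
      rw [Nat.add_comm]
      congr 1
      · exact if_congr (by rw [eq_comm]; simp) rfl rfl

def LH (H : Fin s → ℕ) : List (Fin s) := (List.ofFn fun j => List.replicate (H j) j).flatten

lemma LH_length (H : Fin s → ℕ) : (LH H).length = ∑ j, H j := by
  simp [LH, List.length_flatten, List.map_ofFn, List.sum_ofFn, Function.comp]

lemma LH_count (H : Fin s → ℕ) (j : Fin s) : (LH H).count j = H j := by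
  simp [LH, List.count_flatten, List.map_ofFn, List.count_replicate, List.sum_ofFn,
    Function.comp, Finset.sum_ite_eq]

def wrd (H : Fin s → ℕ) (hH : ∑ j, H j = n) : Fin n → Fin s :=
  fun k => (LH H).get (Fin.cast (by rw [LH_length, hH]) k)

lemma ofFn_wrd (H : Fin s → ℕ) (hH : ∑ j, H j = n) : List.ofFn (wrd H hH) = LH H := by
  apply List.ext_get (by simp [LH_length, hH])
  intro i h1 h2
  simp [wrd, List.get_ofFn]

lemma wrd_count (H : Fin s → ℕ) (hH : ∑ j, H j = n) (j : Fin s) :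
    (Finset.univ.filter fun k => wrd H hH k = j).card = H j := by
  rw [← count_ofFn n (wrd H hH) j, ofFn_wrd, LH_count]

lemma vH_eq (H : Fin s → ℕ) (hH : ∑ j, H j = n) :
    (List.ofFn fun j : Fin s => om n s j ^ H j).prod
      = (List.ofFn fun k => om n s (wrd H hH k)).prod := by
  have h1 : (List.ofFn fun k => om n s (wrd H hH k)) = (List.ofFn (wrd H hH)).map (om n s) := by
    rw [List.map_ofFn]; rfl
  rw [h1, ofFn_wrd, LH]
  simp [List.map_flatten, List.map_ofFn, List.prod_flatten, List.map_replicate,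
    List.prod_replicate, Function.comp]
  refine congrArg List.prod (congrArg List.ofFn (funext fun j => ?_))
  simp [List.map_replicate, List.prod_replicate]

lemma phi_term (f w : Fin n → Fin s) (g : Fin n → Fin n) :
    φ f ((List.ofFn fun k => xel (g k) (w k)).prod)
      = if Function.Injective g ∧ f ∘ g = w then 1 else 0 := by
  have h := interleave (n := n) (s := s) n (fun k => bV n s (Sum.inl (g k)))
    (fun k => bV n s (Sum.inr (g k, w k)))
  have hu : (fun c => pvec (fun k => bV n s (Sum.inl (g k)))
      (fun k => bV n s (Sum.inr (g k, w k))) ((enc n).symm c))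
      = fun r => bV n s (J g w ((enc n).symm r)) := by
    funext c
    rw [pvec, J, apply_ite (bV n s)]
  rw [hu] at h
  simp only [xel]
  rw [h, phi_iotaMulti, det_term]

lemma phi_vH (f : Fin n → Fin s) (H : Fin s → ℕ) (hH : ∑ j, H j = n) :
    φ f ((List.ofFn fun j : Fin s => om n s j ^ H j).prod)
      = ∑ g : Fin n → Fin n,
          if Function.Injective g ∧ f ∘ g = wrd H hH then (1 : ℝ) else 0 := by
  rw [vH_eq H hH, expand n (wrd H hH), map_sum]
  exact Finset.sum_congr rfl fun g _ => phi_term f (wrd H hH) g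

lemma eq_of_compat {H H' : Fin s → ℕ} (hH : ∑ j, H j = n) (hH' : ∑ j, H' j = n)
    (g : Fin n → Fin n) (hg : Function.Injective g)
    (hc : wrd H hH ∘ g = wrd H' hH') : H' = H := by
  funext j
  rw [← wrd_count H' hH' j, ← wrd_count H hH j, ← hc]
  apply Finset.card_bij (fun k _ => g k)
  · intro k hk
    simp only [Finset.mem_filter, Finset.mem_univ, true_and] at hk ⊢
    exact hk
  · intro k1 h1 k2 h2 hge
    exact hg hge
  · intro i hi
    obtain ⟨k, rfl⟩ := (Finite.injective_iff_bijective.mp hg).surjective i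
    refine ⟨k, ?_, rfl⟩
    simp only [Finset.mem_filter, Finset.mem_univ, true_and] at hi ⊢
    exact hi

theorem stmt1' (n s : ℕ) :
    LinearIndependent ℝ
      (fun H : {H : Fin s → ℕ // ∑ j, H j = n} =>
        (List.ofFn fun j : Fin s => om n s j ^ H.1 j).prod) := by
  rw [linearIndependent_iff']
  intro S c hsum H hHS
  have h0 := congrArg (φ (wrd H.1 H.2)) hsum
  rw [map_sum, map_zero] at h0
  simp only [map_smul] at h0
  rw [Finset.sum_eq_single H] at h0
  · rw [phi_vH (wrd H.1 H.2) H.1 H.2] at h0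
    have hterm : (if Function.Injective (id : Fin n → Fin n)
        ∧ wrd H.1 H.2 ∘ id = wrd H.1 H.2 then (1 : ℝ) else 0) = 1 := by
      rw [if_pos ⟨Function.injective_id, rfl⟩]
    have hpos : (0 : ℝ) < ∑ g : Fin n → Fin n,
        if Function.Injective g ∧ wrd H.1 H.2 ∘ g = wrd H.1 H.2 then (1 : ℝ) else 0 := by
      refine lt_of_lt_of_le one_pos ?_
      have hle := Finset.single_le_sum
        (f := fun g : Fin n → Fin n =>
          if Function.Injective g ∧ wrd H.1 H.2 ∘ g = wrd H.1 H.2 then (1 : ℝ) else 0)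
        (fun g _ => by positivity) (Finset.mem_univ id)
      simpa only [hterm] using hle
    rcases smul_eq_zero.mp h0 with h | h
    · exact h
    · exact absurd h (ne_of_gt hpos)
  · intro H' hH'S hne
    rw [phi_vH (wrd H.1 H.2) H'.1 H'.2]
    have hz : (∑ g : Fin n → Fin n,
        if Function.Injective g ∧ wrd H.1 H.2 ∘ g = wrd H'.1 H'.2 then (1 : ℝ) else 0) = 0 := by
      refine Finset.sum_eq_zero fun g _ => ?_
      rw [if_neg]
      rintro ⟨hg, hcmp⟩
      exact hne (Subtype.ext (eq_of_compat H.2 H'.2 g hg hcmp))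
    rw [hz, smul_zero]
  · intro hnotin
    exact absurd hHS hnotin

end Stmt1


theorem stmt1 (n s : ℕ) :
    LinearIndependent ℝ
      (fun H : {H : Fin s → ℕ // ∑ j, H j = n} =>
        (List.ofFn fun j : Fin s => om n s j ^ H.1 j).prod) := by
  exact Stmt1.stmt1' n s
end
end

section
/- Let $(V,\omega_1,\ldots,\omega_s)$ be a non-degenerate polysymplectic vector space of rank $n$ with $s>1$, and let $e_1,\ldots,e_n,e^1_1,\ldots,e^s_n$ and $f_1,\ldots,f_n,f^1_1,\ldots,f^s_n$ be two polysymplectic bases. Then there exist an invertible $n\times n$ real matrix $\theta = (\theta^m_i)$ and a tensor $\eta = (\eta^{mj}_i)$ such that $f_i = \sum_m \theta^m_i e_m + \sum_{m,j}\eta^{mj}_i e^j_m$ and $f^j_i = \sum_m (\theta^{-1})^i_m e^j_m$ for all $i,j$, and moreover $\sum_m \theta^m_i \eta^{mj}_k = \sum_m \theta^m_k \eta^{mj}_i$ for all $i,k,j$. -/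
theorem stmt3 (n s : ℕ) (hs : 1 < s) (V : Type*) [AddCommGroup V] [Module ℝ V]
    (e f : Module.Basis (Fin n ⊕ Fin n × Fin s) ℝ V)
    (ω : Fin s → V →ₗ[ℝ] V →ₗ[ℝ] ℝ)
    (hωe : ∀ (j : Fin s) (v w : V),
      ω j v w = ∑ i : Fin n,
        (e.coord (Sum.inl i) v * e.coord (Sum.inr (i, j)) w
          - e.coord (Sum.inl i) w * e.coord (Sum.inr (i, j)) v))
    (hωf : ∀ (j : Fin s) (v w : V),
      ω j v w = ∑ i : Fin n,
        (f.coord (Sum.inl i) v * f.coord (Sum.inr (i, j)) w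
          - f.coord (Sum.inl i) w * f.coord (Sum.inr (i, j)) v)) :
    ∃ (θ : Matrix (Fin n) (Fin n) ℝ) (η : Fin n → Fin s → Fin n → ℝ),
      IsUnit θ ∧
      (∀ i : Fin n, f (Sum.inl i) =
        (∑ m : Fin n, θ m i • e (Sum.inl m))
          + ∑ m : Fin n, ∑ j : Fin s, η m j i • e (Sum.inr (m, j))) ∧
      (∀ (i : Fin n) (j : Fin s), f (Sum.inr (i, j)) =
        ∑ m : Fin n, θ⁻¹ i m • e (Sum.inr (m, j))) ∧
      (∀ (i k : Fin n) (j : Fin s),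
        ∑ m : Fin n, θ m i * η m j k = ∑ m : Fin n, θ m k * η m j i) := by
  classical
  have hnt : Nontrivial (Fin s) := Fin.nontrivial_iff_two_le.mpr hs
  have hce : ∀ (x y : Fin n ⊕ Fin n × Fin s), e.coord x (e y) = if y = x then 1 else 0 := by
    intro x y; simp [Module.Basis.coord_apply, Finsupp.single_apply]
  have hcf : ∀ (x y : Fin n ⊕ Fin n × Fin s), f.coord x (f y) = if y = x then 1 else 0 := by
    intro x y; simp [Module.Basis.coord_apply, Finsupp.single_apply]
  -- ω against e basis vectors in the second slot
  have hωe_inl : ∀ (j : Fin s) (v : V) (m : Fin n),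
      ω j v (e (Sum.inl m)) = - e.coord (Sum.inr (m, j)) v := by
    intro j v m
    rw [hωe]
    simp [Module.Basis.coord_apply, Finsupp.single_apply, Finset.sum_ite_eq]
  have hωe_inr : ∀ (j j' : Fin s) (v : V) (m : Fin n),
      ω j v (e (Sum.inr (m, j'))) = if j' = j then e.coord (Sum.inl m) v else 0 := by
    intro j j' v m
    rw [hωe]
    by_cases hjj : j' = j <;>
      simp [Module.Basis.coord_apply, Finsupp.single_apply, Finset.sum_ite_eq, hjj, Prod.ext_iff]
  -- ω with f basis vectors in the first slot
  have hωf_inr : ∀ (j : Fin s) (k : Fin n) (l : Fin s) (w : V),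
      ω j (f (Sum.inr (k, l))) w = -(if j = l then f.coord (Sum.inl k) w else 0) := by
    intro j k l w
    rw [hωf]
    by_cases hjl : j = l <;>
      simp [Module.Basis.coord_apply, Finsupp.single_apply, Finset.sum_ite_eq, hjl, Prod.ext_iff,
        eq_comm]
  have hωf_inl : ∀ (j : Fin s) (i : Fin n) (w : V),
      ω j (f (Sum.inl i)) w = f.coord (Sum.inr (i, j)) w := by
    intro j i w
    rw [hωf]
    simp [Module.Basis.coord_apply, Finsupp.single_apply, Finset.sum_ite_eq, eq_comm]
  -- the inl-coordinates of f (inr (k,l)) vanish (using s > 1)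
  have ha : ∀ (k m : Fin n) (l : Fin s), e.coord (Sum.inl m) (f (Sum.inr (k, l))) = 0 := by
    intro k m l
    obtain ⟨j, hj⟩ := exists_ne l
    have h1 := hωe_inr j j (f (Sum.inr (k, l))) m
    rw [if_pos rfl] at h1
    rw [← h1, hωf_inr, if_neg hj, neg_zero]
  -- mixed inr-coordinates vanish
  have hb : ∀ (k m : Fin n) (l j : Fin s), j ≠ l →
      e.coord (Sum.inr (m, j)) (f (Sum.inr (k, l))) = 0 := by
    intro k m l j hj
    have h1 := hωe_inl j (f (Sum.inr (k, l))) m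
    rw [hωf_inr, if_neg hj, neg_zero, eq_comm, neg_eq_zero] at h1
    exact h1
  set θ : Matrix (Fin n) (Fin n) ℝ :=
    fun m i => e.coord (Sum.inl m) (f (Sum.inl i)) with hθ
  set η : Fin n → Fin s → Fin n → ℝ :=
    fun m j i => e.coord (Sum.inr (m, j)) (f (Sum.inl i)) with hη
  set B : Fin s → Matrix (Fin n) (Fin n) ℝ :=
    fun l k m => e.coord (Sum.inr (m, l)) (f (Sum.inr (k, l))) with hB
  -- B l is a left inverse of θ
  have hBθ : ∀ l : Fin s, B l * θ = 1 := by
    intro l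
    ext k i
    rw [Matrix.mul_apply, Matrix.one_apply]
    have h1 := hωf_inl l i (f (Sum.inr (k, l)))
    rw [hcf] at h1
    rw [hωe l (f (Sum.inl i)) (f (Sum.inr (k, l)))] at h1
    rw [Finset.sum_congr rfl (fun m _ => by rw [ha k m l, zero_mul, sub_zero])] at h1
    have h2 : (if (Sum.inr (k, l) : Fin n ⊕ Fin n × Fin s) = Sum.inr (i, l) then (1:ℝ) else 0)
        = if k = i then 1 else 0 := by
      by_cases hki : k = i <;> simp [hki]
    rw [h2] at h1
    rw [← h1]
    exact Finset.sum_congr rfl (fun m _ => mul_comm _ _)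
  have l0 : Fin s := ⟨0, lt_trans one_pos hs⟩
  have hunit : IsUnit θ := (Matrix.isUnit_iff_isUnit_det θ).mpr (Matrix.isUnit_det_of_left_inverse (hBθ l0))
  have hinv : ∀ l, θ⁻¹ = B l := fun l => Matrix.inv_eq_left_inv (hBθ l)
  refine ⟨θ, η, hunit, ?_, ?_, ?_⟩
  · -- expansion of f (inl i)
    intro i
    conv_lhs => rw [← e.sum_repr (f (Sum.inl i))]
    rw [Fintype.sum_sum_type]
    congr 1
    rw [Fintype.sum_prod_type]
    exact Finset.sum_congr rfl (fun m _ => Finset.sum_congr rfl (fun j _ => rfl))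
  · -- expansion of f (inr (i, j))
    intro i j
    conv_lhs => rw [← e.sum_repr (f (Sum.inr (i, j)))]
    rw [Fintype.sum_sum_type, Fintype.sum_prod_type]
    have h0 : (∑ m : Fin n, e.repr (f (Sum.inr (i, j))) (Sum.inl m) • e (Sum.inl m)) = 0 := by
      refine Finset.sum_eq_zero fun m _ => ?_
      have := ha i m j
      rw [Module.Basis.coord_apply] at this
      rw [this, zero_smul]
    rw [h0, zero_add]
    refine Finset.sum_congr rfl fun m _ => ?_
    have h1 : (∑ j' : Fin s, e.repr (f (Sum.inr (i, j))) (Sum.inr (m, j')) • e (Sum.inr (m, j')))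
        = e.repr (f (Sum.inr (i, j))) (Sum.inr (m, j)) • e (Sum.inr (m, j)) := by
      rw [Finset.sum_eq_single j]
      · intro j' _ hj'
        have := hb i m j j' hj'
        rw [Module.Basis.coord_apply] at this
        rw [this, zero_smul]
      · intro h; exact absurd (Finset.mem_univ j) h
    rw [h1, hinv j]
    rfl
  · -- symmetry condition
    intro i k j
    have h1 := hωf_inl j i (f (Sum.inl k))
    rw [hcf] at h1
    rw [if_neg (by simp)] at h1
    rw [hωe j (f (Sum.inl i)) (f (Sum.inl k))] at h1
    rw [Finset.sum_sub_distrib] at h1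
    have h2 := sub_eq_zero.mp h1
    exact h2
end

section
/- Let $(V,\omega_1,\ldots,\omega_s)$ be a non-degenerate polysymplectic vector space of rank $n$ with $s>1$, and suppose $e_1,\ldots,e_n,e^1_1,\ldots,e^s_n$ and $f_1,\ldots,f_n,f^1_1,\ldots,f^s_n$ are two polysymplectic bases which are both orthonormal with respect to a common positive definite inner product on $V$. Then $f_i \in \mathrm{span}(e_1,\ldots,e_n)$ for all $i$; i.e. the 'mixed' tensor $\eta$ in the change-of-basis formula vanishes identically. -/
noncomputable section Stmt5Aux

variable {n s : ℕ} {V : Type*} [AddCommGroup V] [Module ℝ V]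

/-- The operator `T_j` associated to a polysymplectic basis `g`. -/
noncomputable def stmt5T (g : Module.Basis (Fin n ⊕ Fin n × Fin s) ℝ V) (j : Fin s) : V →ₗ[ℝ] V :=
  ∑ m : Fin n, ((g.coord (Sum.inr (m, j))).smulRight (g (Sum.inl m))
      - (g.coord (Sum.inl m)).smulRight (g (Sum.inr (m, j))))

lemma stmt5T_apply (g : Module.Basis (Fin n ⊕ Fin n × Fin s) ℝ V) (j : Fin s) (v : V) :
    stmt5T g j v = ∑ m : Fin n, (g.coord (Sum.inr (m, j)) v • g (Sum.inl m)
      - g.coord (Sum.inl m) v • g (Sum.inr (m, j))) := by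
  simp [stmt5T]

lemma stmt5T_inl (g : Module.Basis (Fin n ⊕ Fin n × Fin s) ℝ V) (j : Fin s) (i : Fin n) :
    stmt5T g j (g (Sum.inl i)) = -(g (Sum.inr (i, j))) := by
  rw [stmt5T_apply]
  simp [Module.Basis.coord_apply, Module.Basis.repr_self, Finsupp.single_apply, Finset.sum_ite_eq']

lemma stmt5T_inr (g : Module.Basis (Fin n ⊕ Fin n × Fin s) ℝ V) (j k : Fin s) (i : Fin n) :
    stmt5T g j (g (Sum.inr (i, k))) = if k = j then g (Sum.inl i) else 0 := by
  rw [stmt5T_apply]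
  simp [Module.Basis.coord_apply, Module.Basis.repr_self, Finsupp.single_apply, Prod.ext_iff]
  by_cases h : k = j <;> simp [h, Finset.sum_ite_eq']

/-- For an orthonormal basis, coordinates are computed by the inner product. -/
lemma stmt5_coord_eq (g : Module.Basis (Fin n ⊕ Fin n × Fin s) ℝ V) (B : V →ₗ[ℝ] V →ₗ[ℝ] ℝ)
    (hBg : ∀ a b : Fin n ⊕ Fin n × Fin s, B (g a) (g b) = if a = b then 1 else 0)
    (a : Fin n ⊕ Fin n × Fin s) (v : V) : B (g a) v = g.coord a v := by
  conv_lhs => rw [← g.sum_repr v]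
  rw [map_sum]
  simp [hBg, Module.Basis.coord_apply]

lemma stmt5_B_T (g : Module.Basis (Fin n ⊕ Fin n × Fin s) ℝ V) (B : V →ₗ[ℝ] V →ₗ[ℝ] ℝ)
    (hBsymm : ∀ v w, B v w = B w v)
    (hBg : ∀ a b : Fin n ⊕ Fin n × Fin s, B (g a) (g b) = if a = b then 1 else 0)
    (j : Fin s) (v w : V) :
    B w (stmt5T g j v) = ∑ i : Fin n,
      (g.coord (Sum.inl i) w * g.coord (Sum.inr (i, j)) v
        - g.coord (Sum.inl i) v * g.coord (Sum.inr (i, j)) w) := by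
  rw [stmt5T_apply, map_sum]
  refine Finset.sum_congr rfl fun m _ => ?_
  rw [map_sub, map_smul, map_smul]
  rw [hBsymm w (g (Sum.inl m)), hBsymm w (g (Sum.inr (m, j))),
    stmt5_coord_eq g B hBg, stmt5_coord_eq g B hBg]
  simp [smul_eq_mul]; ring

end Stmt5Aux

theorem stmt5 (n s : ℕ) (hs : 1 < s) (V : Type*) [AddCommGroup V] [Module ℝ V]
    (e f : Module.Basis (Fin n ⊕ Fin n × Fin s) ℝ V)
    (ω : Fin s → V →ₗ[ℝ] V →ₗ[ℝ] ℝ)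
    (hωe : ∀ (j : Fin s) (v w : V),
      ω j v w = ∑ i : Fin n,
        (e.coord (Sum.inl i) v * e.coord (Sum.inr (i, j)) w
          - e.coord (Sum.inl i) w * e.coord (Sum.inr (i, j)) v))
    (hωf : ∀ (j : Fin s) (v w : V),
      ω j v w = ∑ i : Fin n,
        (f.coord (Sum.inl i) v * f.coord (Sum.inr (i, j)) w
          - f.coord (Sum.inl i) w * f.coord (Sum.inr (i, j)) v))
    (B : V →ₗ[ℝ] V →ₗ[ℝ] ℝ)
    (hBsymm : ∀ v w, B v w = B w v)
    (hBpos : ∀ v : V, v ≠ 0 → 0 < B v v)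
    (hBe : ∀ a b : Fin n ⊕ Fin n × Fin s, B (e a) (e b) = if a = b then 1 else 0)
    (hBf : ∀ a b : Fin n ⊕ Fin n × Fin s, B (f a) (f b) = if a = b then 1 else 0) :
    ∀ i : Fin n,
      f (Sum.inl i) ∈ Submodule.span ℝ (Set.range fun m : Fin n => e (Sum.inl m)) := by
  intro i
  -- the operators T_j agree for both bases
  have hT : ∀ j : Fin s, stmt5T e j = stmt5T f j := by
    intro j
    ext v
    by_contra h
    have hd : stmt5T e j v - stmt5T f j v ≠ 0 := sub_ne_zero.mpr h
    have hzero : ∀ w, B w (stmt5T e j v - stmt5T f j v) = 0 := by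
      intro w
      rw [map_sub, stmt5_B_T e B hBsymm hBe, stmt5_B_T f B hBsymm hBf,
        ← hωe j w v, ← hωf j w v, sub_self]
    have := hBpos _ hd
    rw [hBsymm, hzero] at this
    exact lt_irrefl 0 this
  set j0 : Fin s := ⟨0, by omega⟩
  set j1 : Fin s := ⟨1, hs⟩
  have hj01 : j1 ≠ j0 := by simp [j0, j1, Fin.ext_iff]
  -- P := T0 ∘ T0 ∘ T1 ∘ T1 fixes f (inl i)
  have hfix : stmt5T e j0 (stmt5T e j0 (stmt5T e j1 (stmt5T e j1 (f (Sum.inl i))))) =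
      f (Sum.inl i) := by
    simp [hT, stmt5T_inl, stmt5T_inr]
  -- and P maps everything into the span of the e (inl m)
  rw [← hfix]
  set S := Submodule.span ℝ (Set.range fun m : Fin n => e (Sum.inl m)) with hS
  have hPa : ∀ a : Fin n ⊕ Fin n × Fin s,
      stmt5T e j0 (stmt5T e j0 (stmt5T e j1 (stmt5T e j1 (e a)))) ∈ S := by
    rintro (m | ⟨m, k⟩)
    · simp [stmt5T_inl, map_neg, stmt5T_inr]
      exact Submodule.subset_span ⟨m, rfl⟩
    · rw [stmt5T_inr]
      by_cases h : k = j1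
      · simp only [if_pos h, stmt5T_inl, map_neg, stmt5T_inr, if_neg hj01, neg_zero,
          map_zero]
        exact Submodule.zero_mem S
      · rw [if_neg h, map_zero, map_zero, map_zero]
        exact Submodule.zero_mem S
  rw [← e.sum_repr (f (Sum.inl i))]
  rw [map_sum, map_sum, map_sum, map_sum]
  refine Submodule.sum_mem S fun a _ => ?_
  rw [map_smul, map_smul, map_smul, map_smul]
  exact Submodule.smul_mem S _ (hPa a)
end

section
/- Let $(V,\omega_1,\ldots,\omega_s)$ be a non-degenerate polysymplectic vector space of rank $n$ with $s>1$. Then the subspace of $V$ spanned by $e^1_1,\ldots,e^s_n$ is the same for every polysymplectic basis $e_1,\ldots,e_n,e^1_1,\ldots,e^s_n$; i.e. there is a canonically determined subspace of $V$ of dimension $ns$. -/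
private lemma polysymp_span_eq_iSup_ker (n s : ℕ) (hs : 1 < s) (V : Type*) [AddCommGroup V]
    [Module ℝ V] (e : Module.Basis (Fin n ⊕ Fin n × Fin s) ℝ V)
    (ω : Fin s → V →ₗ[ℝ] V →ₗ[ℝ] ℝ)
    (hωe : ∀ (j : Fin s) (v w : V),
      ω j v w = ∑ i : Fin n,
        (e.coord (Sum.inl i) v * e.coord (Sum.inr (i, j)) w
          - e.coord (Sum.inl i) w * e.coord (Sum.inr (i, j)) v)) :
    Submodule.span ℝ (Set.range fun p : Fin n × Fin s => e (Sum.inr p))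
      = ⨆ j : Fin s, LinearMap.ker (ω j) := by
  apply le_antisymm
  · rw [Submodule.span_le]
    rintro _ ⟨⟨i, k⟩, rfl⟩
    obtain ⟨j, hj⟩ : ∃ j : Fin s, j ≠ k := by
      haveI : Nontrivial (Fin s) := ⟨⟨0, by omega⟩, ⟨1, by omega⟩, by
        simp [Fin.ext_iff]⟩
      exact exists_ne k
    refine Submodule.mem_iSup_of_mem j ?_
    rw [LinearMap.mem_ker]
    ext w
    simp only [LinearMap.zero_apply]
    rw [hωe]
    simp [Module.Basis.coord_apply, Module.Basis.repr_self, Finsupp.single_apply, hj.symm, Prod.ext_iff]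
  · refine iSup_le fun j => fun v hv => ?_
    rw [LinearMap.mem_ker] at hv
    have h : ∀ i, (e.repr v) (Sum.inl i) = 0 := by
      intro i
      have h1 : ω j v (e (Sum.inr (i, j))) = 0 := by rw [hv]; rfl
      rw [hωe] at h1
      simpa [Module.Basis.coord_apply, Module.Basis.repr_self, Finsupp.single_apply, Prod.ext_iff,
        Finset.sum_ite_eq'] using h1
    have : v ∈ Submodule.span ℝ (⇑e '' Set.range Sum.inr) := by
      rw [Module.Basis.mem_span_image]
      intro x hx
      rcases x with i | p
      · exact absurd (h i) (Finsupp.mem_support_iff.mp hx)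
      · exact ⟨p, rfl⟩
    simpa [← Set.range_comp, Function.comp_def] using this

theorem stmt6 (n s : ℕ) (hs : 1 < s) (V : Type*) [AddCommGroup V] [Module ℝ V]
    (e f : Module.Basis (Fin n ⊕ Fin n × Fin s) ℝ V)
    (ω : Fin s → V →ₗ[ℝ] V →ₗ[ℝ] ℝ)
    (hωe : ∀ (j : Fin s) (v w : V),
      ω j v w = ∑ i : Fin n,
        (e.coord (Sum.inl i) v * e.coord (Sum.inr (i, j)) w
          - e.coord (Sum.inl i) w * e.coord (Sum.inr (i, j)) v))
    (hωf : ∀ (j : Fin s) (v w : V),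
      ω j v w = ∑ i : Fin n,
        (f.coord (Sum.inl i) v * f.coord (Sum.inr (i, j)) w
          - f.coord (Sum.inl i) w * f.coord (Sum.inr (i, j)) v)) :
    Submodule.span ℝ (Set.range fun p : Fin n × Fin s => e (Sum.inr p))
      = Submodule.span ℝ (Set.range fun p : Fin n × Fin s => f (Sum.inr p))
    ∧ Module.finrank ℝ
        ↥(Submodule.span ℝ (Set.range fun p : Fin n × Fin s => e (Sum.inr p))) = n * s := by
  constructor
  · rw [polysymp_span_eq_iSup_ker n s hs V e ω hωe, polysymp_span_eq_iSup_ker n s hs V f ω hωf]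
  · have li : LinearIndependent ℝ fun p : Fin n × Fin s => e (Sum.inr p) :=
      e.linearIndependent.comp _ Sum.inr_injective
    rw [finrank_span_eq_card li]
    simp
end

section
/- In the setting of the Lefschetz operators $L_k$, $\Lambda_k$, $H_k=[L_k,\Lambda_k]$ on the exterior algebra of a real vector space of dimension $n(s+1)$ with a flat polysymplectic structure $\omega_k = \sum_i dx_i\wedge dy^k_i$ and the standard inner product, for $k\neq h$ one has $[H_k, L_h] = L_h$ and $[H_k,\Lambda_h] = -\Lambda_h$. -/
/-!
STATEMENT 9: With the flat Lefschetz operators `L_k`, their adjoints `Λ_k` (with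
respect to the inner product making the basis monomials orthonormal) and
`H_k = [L_k, Λ_k]`, for `k ≠ h` one has `[H_k, L_h] = L_h` and `[H_k, Λ_h] = -Λ_h`.
-/

noncomputable section

abbrev Wns (n s : ℕ) := ExteriorAlgebra ℝ (Vns n s)

/-- An identification of the index set with `Fin (n + n*s)`, fixing an ordering of the
basis covectors `dx_1, …, dx_n, dy^1_1, …, dy^s_n`. -/
def idxEquiv (n s : ℕ) : Idx n s ≃ Fin (n + n * s) :=
  (Equiv.sumCongr (Equiv.refl (Fin n)) finProdFinEquiv).trans finSumFinEquiv

/-- The basis monomial `e_{a_1} ∧ ⋯ ∧ e_{a_k}` of the exterior algebra associated to a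
finite set `P` of indices (taken in increasing order). -/
def mono (n s : ℕ) (P : Finset (Idx n s)) : Wns n s :=
  (((P.image (idxEquiv n s)).sort (· ≤ ·)).map
    fun t => ExteriorAlgebra.ι ℝ (bV n s ((idxEquiv n s).symm t))).prod

/-- The Lefschetz operator `L_k`: wedge multiplication by `ω_k = ∑ i, dx_i ∧ dy^k_i`. -/
def Lop (n s : ℕ) (k : Fin s) : Wns n s →ₗ[ℝ] Wns n s :=
  LinearMap.mulLeft ℝ
    (∑ i : Fin n,
      ExteriorAlgebra.ι ℝ (bV n s (Sum.inl i))
        * ExteriorAlgebra.ι ℝ (bV n s (Sum.inr (i, k))))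

/-- Commutator of endomorphisms. -/
def lcomm {R M : Type*} [CommSemiring R] [AddCommGroup M] [Module R M]
    (A B : M →ₗ[R] M) : M →ₗ[R] M :=
  A ∘ₗ B - B ∘ₗ A

namespace Stmt9Aux

open ExteriorAlgebra

variable {n s : ℕ}

instance instRingEndW : Ring (Module.End ℝ (Wns n s)) := Module.End.instRing

/-- creation operator -/
def aop (n s : ℕ) (p : Idx n s) : Module.End ℝ (Wns n s) :=
  LinearMap.mulLeft ℝ (ι ℝ (bV n s p))

/-- annihilation operator -/
def cop (n s : ℕ) (p : Idx n s) : Module.End ℝ (Wns n s) :=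
  CliffordAlgebra.contractLeft (Q := (0 : QuadraticForm ℝ (Vns n s))) ((bV n s).coord p)

lemma aop_apply (p : Idx n s) (x : Wns n s) : aop n s p x = ι ℝ (bV n s p) * x := rfl

lemma cop_aop_apply (p q : Idx n s) (x : Wns n s) :
    cop n s p (aop n s q x) = (if q = p then (1:ℝ) else 0) • x - aop n s q (cop n s p x) := by
  rw [aop_apply, aop_apply, cop, CliffordAlgebra.contractLeft_ι_mul]
  congr 1
  rw [Module.Basis.coord_apply, Module.Basis.repr_self, Finsupp.single_apply]

lemma car3 (p q : Idx n s) :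
    cop n s p * aop n s q = (if q = p then (1:ℝ) else 0) • 1 - aop n s q * cop n s p := by
  refine LinearMap.ext fun x => ?_
  simp only [Module.End.mul_apply, LinearMap.sub_apply, LinearMap.smul_apply, Module.End.one_apply]
  simpa using cop_aop_apply p q x

lemma ca_swap {p q : Idx n s} (h : q ≠ p) :
    cop n s p * aop n s q = -(aop n s q * cop n s p) := by
  rw [car3, if_neg h, zero_smul, zero_sub]

lemma ca_self (p : Idx n s) :
    cop n s p * aop n s p = 1 - aop n s p * cop n s p := by
  rw [car3, if_pos rfl, one_smul]

lemma aa_swap (p q : Idx n s) :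
    aop n s p * aop n s q = -(aop n s q * aop n s p) := by
  refine LinearMap.ext fun x => ?_
  simp only [Module.End.mul_apply, aop_apply, LinearMap.neg_apply, ← mul_assoc]
  rw [eq_neg_iff_add_eq_zero, ← add_mul, ι_add_mul_swap, zero_mul]

lemma cc_swap (p q : Idx n s) :
    cop n s p * cop n s q = -(cop n s q * cop n s p) := by
  refine LinearMap.ext fun x => ?_
  exact CliffordAlgebra.contractLeft_comm _ _ x

lemma aa_self (p : Idx n s) : aop n s p * aop n s p = 0 := by
  refine LinearMap.ext fun x => ?_
  simp only [Module.End.mul_apply, aop_apply, LinearMap.zero_apply, ← mul_assoc, ι_sq_zero,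
    zero_mul]

section Lists

variable {n s : ℕ}

def ib (n s : ℕ) (t : Fin (n + n * s)) : Wns n s := ι ℝ (bV n s ((idxEquiv n s).symm t))

def mLL (n s : ℕ) (l : List (Fin (n + n * s))) : Wns n s := (l.map (ib n s)).prod

lemma mLL_nil : mLL n s [] = 1 := rfl

lemma mLL_cons (u : Fin (n + n * s)) (l : List (Fin (n + n * s))) :
    mLL n s (u :: l) = ib n s u * mLL n s l := by
  simp [mLL]

lemma mono_eq (P : Finset (Idx n s)) :
    mono n s P = mLL n s ((P.image (idxEquiv n s)).sort (· ≤ ·)) := rfl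

lemma ib_swap (t u : Fin (n + n * s)) : ib n s t * ib n s u = -(ib n s u * ib n s t) := by
  rw [eq_neg_iff_add_eq_zero]
  exact ι_add_mul_swap _ _

lemma ib_mul_mLL (t : Fin (n + n * s)) : ∀ (l : List (Fin (n + n * s))), l.Pairwise (· < ·) →
    ib n s t * mLL n s l =
      if t ∈ l then 0
      else ((-1 : ℝ) ^ (l.countP (fun x => decide (x < t)))) •
        mLL n s (l.orderedInsert (· ≤ ·) t)
  | [], _ => by simp [mLL_nil, List.orderedInsert, mLL_cons]
  | u :: l, hl => by
    obtain ⟨hu, hl'⟩ := List.pairwise_cons.mp hl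
    rw [mLL_cons]
    by_cases htu : t = u
    · subst htu
      rw [if_pos List.mem_cons_self, ← mul_assoc]
      rw [show ib n s t * ib n s t = 0 from ι_sq_zero _, zero_mul]
    by_cases htl : t ∈ l
    · rw [if_pos (List.mem_cons.mpr (Or.inr htl)), ← mul_assoc, ib_swap, neg_mul, mul_assoc,
        ib_mul_mLL t l hl', if_pos htl, mul_zero, neg_zero]
    have htmem : t ∉ u :: l := by simp [htu, htl]
    rw [if_neg htmem]
    by_cases hle : t ≤ u
    · have htu' : t < u := lt_of_le_of_ne hle htu
      have hcount : (u :: l).countP (fun x => decide (x < t)) = 0 := by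
        rw [List.countP_eq_zero]
        intro x hx
        rcases List.mem_cons.mp hx with rfl | hx
        · simp [not_lt.mpr htu'.le]
        · simp only [decide_eq_true_eq, not_lt]
          exact (htu'.trans (hu x hx)).le
      rw [List.orderedInsert, if_pos hle, hcount, pow_zero, one_smul, mLL_cons, mLL_cons]
    · have hut : u < t := not_le.mp hle
      have hcount : (u :: l).countP (fun x => decide (x < t))
          = l.countP (fun x => decide (x < t)) + 1 := by
        rw [List.countP_cons, if_pos (by simpa using hut)]
      rw [List.orderedInsert, if_neg hle, ← mul_assoc, ib_swap, neg_mul, mul_assoc,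
        ib_mul_mLL t l hl', if_neg htl, mLL_cons, hcount, pow_succ]
      rw [mul_smul, smul_comm]
      simp [mul_comm]

lemma cop_one (p : Idx n s) : cop n s p (1 : Wns n s) = 0 :=
  CliffordAlgebra.contractLeft_one _ _

lemma cop_ib_mul (p : Idx n s) (u : Fin (n + n * s)) (x : Wns n s) :
    cop n s p (ib n s u * x)
      = (if u = idxEquiv n s p then (1:ℝ) else 0) • x - ib n s u * cop n s p x := by
  rw [cop, ib, CliffordAlgebra.contractLeft_ι_mul]
  congr 1
  rw [Module.Basis.coord_apply, Module.Basis.repr_self, Finsupp.single_apply]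
  simp [Equiv.eq_symm_apply, eq_comm]

lemma cop_mLL (p : Idx n s) : ∀ (l : List (Fin (n + n * s))), l.Pairwise (· < ·) →
    cop n s p (mLL n s l) =
      if idxEquiv n s p ∈ l then
        ((-1 : ℝ) ^ (l.countP (fun x => decide (x < idxEquiv n s p)))) •
          mLL n s (l.erase (idxEquiv n s p))
      else 0
  | [], _ => by simp [mLL_nil, cop_one]
  | u :: l, hl => by
    obtain ⟨hu, hl'⟩ := List.pairwise_cons.mp hl
    rw [mLL_cons, cop_ib_mul]
    by_cases hut : u = idxEquiv n s p
    · subst hut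
      have hnl : idxEquiv n s p ∉ l := fun h => lt_irrefl _ (hu _ h)
      rw [if_pos rfl, one_smul, cop_mLL p l hl', if_neg hnl, mul_zero, sub_zero,
        if_pos List.mem_cons_self, List.erase_cons_head]
      have hcount : ((idxEquiv n s p) :: l).countP (fun x => decide (x < idxEquiv n s p)) = 0 := by
        rw [List.countP_eq_zero]
        intro x hx
        simp only [decide_eq_true_eq, not_lt]
        rcases List.mem_cons.mp hx with rfl | hx
        · exact le_refl _
        · exact (hu x hx).le
      rw [hcount, pow_zero, one_smul]
    · rw [if_neg hut, zero_smul, zero_sub, cop_mLL p l hl']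
      by_cases htl : idxEquiv n s p ∈ l
      · have hut' : u < idxEquiv n s p := hu _ htl
        rw [if_pos htl, if_pos (List.mem_cons.mpr (Or.inr htl))]
        have herase : (u :: l).erase (idxEquiv n s p) = u :: l.erase (idxEquiv n s p) := by
          rw [List.erase_cons_tail]
          simpa using hut
        have hcount : (u :: l).countP (fun x => decide (x < idxEquiv n s p))
            = l.countP (fun x => decide (x < idxEquiv n s p)) + 1 := by
          rw [List.countP_cons, if_pos (by simpa using hut')]
        rw [herase, hcount, mLL_cons, pow_succ, mul_smul, smul_comm]
        simp [mul_comm]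
      · have hniml : idxEquiv n s p ∉ u :: l := by
          simp only [List.mem_cons, not_or]
          exact ⟨fun h => hut h.symm, htl⟩
        rw [if_neg htl, if_neg hniml, mul_zero, neg_zero]

section FinsetBridge

open Finset

variable (S : Finset (Fin (n + n * s))) (t : Fin (n + n * s))

lemma sort_insert_eq (h : t ∉ S) :
    (insert t S).sort (· ≤ ·) = (S.sort (· ≤ ·)).orderedInsert (· ≤ ·) t := by
  refine List.Perm.eq_of_pairwise' (Finset.pairwise_sort _ _)
    ((Finset.pairwise_sort S (· ≤ ·)).orderedInsert t _) ?_
  rw [← Multiset.coe_eq_coe]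
  rw [Finset.sort_eq, Finset.insert_val_of_notMem h,
    Multiset.coe_eq_coe.mpr (List.perm_orderedInsert (· ≤ ·) t (S.sort (· ≤ ·)))]
  show _ = ((t :: S.sort (· ≤ ·) : List _) : Multiset (Fin (n + n * s)))
  rw [← Multiset.cons_coe, Finset.sort_eq]

lemma sort_erase_eq : (S.erase t).sort (· ≤ ·) = (S.sort (· ≤ ·)).erase t := by
  refine List.Perm.eq_of_pairwise' (Finset.pairwise_sort _ _)
    ((Finset.pairwise_sort S (· ≤ ·)).sublist (List.erase_sublist)) ?_
  rw [← Multiset.coe_eq_coe, Finset.sort_eq, ← Multiset.coe_erase, Finset.sort_eq,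
    Finset.erase_val]

lemma sort_countP (P : Fin (n + n * s) → Prop) [DecidablePred P] :
    (S.sort (· ≤ ·)).countP (fun x => decide (P x)) = (S.filter P).card := by
  rw [← Multiset.coe_countP, Finset.sort_eq, Multiset.countP_eq_card_filter]
  rw [Finset.card, Finset.filter_val]

end FinsetBridge

end Lists

section MonoLemmas

variable {n s : ℕ}

lemma ι_bV_eq_ib (p : Idx n s) : ι ℝ (bV n s p) = ib n s (idxEquiv n s p) := by
  rw [ib, Equiv.symm_apply_apply]

lemma mem_image_idx (p : Idx n s) (P : Finset (Idx n s)) :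
    idxEquiv n s p ∈ P.image (idxEquiv n s) ↔ p ∈ P := by
  rw [Finset.mem_image]
  constructor
  · rintro ⟨q, hq, hqe⟩
    rwa [← (idxEquiv n s).injective hqe]
  · exact fun hp => ⟨p, hp, rfl⟩

lemma count_image_idx (p : Idx n s) (P : Finset (Idx n s)) :
    ((P.image (idxEquiv n s)).sort (· ≤ ·)).countP
        (fun x => decide (x < idxEquiv n s p))
      = (P.filter (fun q => idxEquiv n s q < idxEquiv n s p)).card := by
  rw [sort_countP, Finset.filter_image, Finset.card_image_of_injective _ (idxEquiv n s).injective]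

lemma aop_mono (p : Idx n s) (P : Finset (Idx n s)) :
    aop n s p (mono n s P) =
      if p ∈ P then 0
      else ((-1 : ℝ) ^ ((P.filter (fun q => idxEquiv n s q < idxEquiv n s p)).card)) •
        mono n s (insert p P) := by
  rw [aop_apply, ι_bV_eq_ib, mono_eq, ib_mul_mLL _ _ (List.sortedLT_iff_pairwise.mp (Finset.sortedLT_sort _))]
  by_cases hp : p ∈ P
  · rw [if_pos (Finset.mem_sort (· ≤ ·) |>.mpr ((mem_image_idx p P).mpr hp)), if_pos hp]
  · have hnim : idxEquiv n s p ∉ P.image (idxEquiv n s) := fun h => hp ((mem_image_idx p P).mp h)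
    rw [if_neg (fun h => hnim (Finset.mem_sort (· ≤ ·) |>.mp h)), if_neg hp, count_image_idx,
      ← sort_insert_eq _ _ hnim, ← Finset.image_insert, mono_eq]

lemma cop_mono (p : Idx n s) (P : Finset (Idx n s)) :
    cop n s p (mono n s P) =
      if p ∈ P then
        ((-1 : ℝ) ^ ((P.filter (fun q => idxEquiv n s q < idxEquiv n s p)).card)) •
          mono n s (P.erase p)
      else 0 := by
  rw [mono_eq, cop_mLL _ _ (List.sortedLT_iff_pairwise.mp (Finset.sortedLT_sort _))]
  by_cases hp : p ∈ P
  · rw [if_pos (Finset.mem_sort (· ≤ ·) |>.mpr ((mem_image_idx p P).mpr hp)), if_pos hp,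
      count_image_idx, ← sort_erase_eq, ← Finset.image_erase (idxEquiv n s).injective, mono_eq]
  · have hnim : idxEquiv n s p ∉ P.image (idxEquiv n s) := fun h => hp ((mem_image_idx p P).mp h)
    rw [if_neg (fun h => hnim (Finset.mem_sort (· ≤ ·) |>.mp h)), if_neg hp]

lemma mono_empty : mono n s (∅ : Finset (Idx n s)) = 1 := by
  simp [mono_eq, mLL]

lemma span_mono_top : Submodule.span ℝ (Set.range (mono n s)) = ⊤ := by
  set S := Submodule.span ℝ (Set.range (mono n s)) with hS
  have hmem : ∀ P, mono n s P ∈ S := fun P => Submodule.subset_span ⟨P, rfl⟩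
  have h1 : ∀ (p : Idx n s) (P : Finset (Idx n s)), ι ℝ (bV n s p) * mono n s P ∈ S := by
    intro p P
    rw [← aop_apply, aop_mono]
    split
    · exact Submodule.zero_mem S
    · exact Submodule.smul_mem S _ (hmem _)
  have h2 : ∀ (v : Vns n s) (y : Wns n s), y ∈ S → ι ℝ v * y ∈ S := by
    intro v y hy
    induction hy using Submodule.span_induction with
    | mem z hz =>
      obtain ⟨P, rfl⟩ := hz
      rw [← (bV n s).sum_repr v, map_sum, Finset.sum_mul]
      refine Submodule.sum_mem S fun p _ => ?_
      rw [map_smul, smul_mul_assoc]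
      exact Submodule.smul_mem S _ (h1 p P)
    | zero => simp [Submodule.zero_mem]
    | add a b _ _ ha hb => rw [mul_add]; exact Submodule.add_mem S ha hb
    | smul r a _ ha => rw [mul_smul_comm]; exact Submodule.smul_mem S r ha
  have main : ∀ x : Wns n s, ∀ y ∈ S, x * y ∈ S := by
    intro x
    induction x using CliffordAlgebra.induction with
    | algebraMap r =>
      intro y hy
      rw [← Algebra.smul_def]
      exact Submodule.smul_mem S r hy
    | ι v => exact h2 v
    | mul a b ha hb => intro y hy; rw [mul_assoc]; exact ha _ (hb y hy)
    | add a b ha hb => intro y hy; rw [add_mul]; exact Submodule.add_mem S (ha y hy) (hb y hy)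
  rw [Submodule.eq_top_iff']
  intro x
  simpa using main x 1 (mono_empty ▸ hmem ∅)

end MonoLemmas

section Adjoint

variable {n s : ℕ}

def Lstd (n s : ℕ) (k : Fin s) : Module.End ℝ (Wns n s) :=
  ∑ i : Fin n, aop n s (Sum.inl i) * aop n s (Sum.inr (i, k))

def Λstd (n s : ℕ) (k : Fin s) : Module.End ℝ (Wns n s) :=
  ∑ i : Fin n, cop n s (Sum.inr (i, k)) * cop n s (Sum.inl i)

lemma Lop_eq (k : Fin s) : Lop n s k = Lstd n s k := by
  refine LinearMap.ext fun x => ?_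
  simp [Lop, Lstd, LinearMap.mulLeft_apply, Finset.sum_mul, LinearMap.sum_apply,
    Module.End.mul_apply, aop_apply, mul_assoc]

variable (B : Wns n s →ₗ[ℝ] Wns n s →ₗ[ℝ] ℝ)

def IsAdj (T T' : Module.End ℝ (Wns n s)) : Prop := ∀ α β, B (T α) β = B α (T' β)

variable {B}

lemma nondeg_right
    (hBortho : ∀ P Q : Finset (Idx n s),
      B (mono n s P) (mono n s Q) = if P = Q then 1 else 0)
    {γ : Wns n s} (h : ∀ P, B (mono n s P) γ = 0) : γ = 0 := by
  have hγ : γ ∈ Submodule.span ℝ (Set.range (mono n s)) := by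
    rw [span_mono_top]; trivial
  rw [Finsupp.mem_span_range_iff_exists_finsupp] at hγ
  obtain ⟨c, rfl⟩ := hγ
  have hc : ∀ Q, c Q = 0 := by
    intro Q
    have := h Q
    rw [Finsupp.sum, map_sum] at this
    simp only [map_smul, hBortho, smul_eq_mul] at this
    simp only [mul_ite, mul_one, mul_zero] at this
    rw [Finset.sum_ite_eq] at this
    by_cases hQ : Q ∈ c.support
    · rwa [if_pos hQ] at this
    · exact Finsupp.notMem_support_iff.mp hQ
  simp [Finsupp.sum, hc]

lemma isAdj_unique_right
    (hBortho : ∀ P Q : Finset (Idx n s),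
      B (mono n s P) (mono n s Q) = if P = Q then 1 else 0)
    {X T S : Module.End ℝ (Wns n s)} (h1 : IsAdj B X T) (h2 : IsAdj B X S) : T = S := by
  refine LinearMap.ext fun β => ?_
  rw [← sub_eq_zero, ← LinearMap.sub_apply]
  refine nondeg_right hBortho fun P => ?_
  rw [LinearMap.sub_apply, map_sub, ← h1 (mono n s P) β, ← h2 (mono n s P) β, sub_self]

lemma isAdj_unique_left
    (hBsymm : ∀ α β, B α β = B β α)
    (hBortho : ∀ P Q : Finset (Idx n s),
      B (mono n s P) (mono n s Q) = if P = Q then 1 else 0)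
    {X T S : Module.End ℝ (Wns n s)} (h1 : IsAdj B T X) (h2 : IsAdj B S X) : T = S := by
  refine LinearMap.ext fun α => ?_
  rw [← sub_eq_zero, ← LinearMap.sub_apply]
  refine nondeg_right hBortho fun P => ?_
  rw [hBsymm, LinearMap.sub_apply, map_sub, LinearMap.sub_apply, h1 α (mono n s P),
    h2 α (mono n s P), sub_self]

lemma isAdj_mul {T T' S S' : Module.End ℝ (Wns n s)}
    (hT : IsAdj B T T') (hS : IsAdj B S S') : IsAdj B (T * S) (S' * T') := by
  intro α β
  rw [Module.End.mul_apply, Module.End.mul_apply, hT, hS]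

lemma isAdj_sum {ι : Type*} (t : Finset ι) (f g : ι → Module.End ℝ (Wns n s))
    (h : ∀ i ∈ t, IsAdj B (f i) (g i)) : IsAdj B (∑ i ∈ t, f i) (∑ i ∈ t, g i) := by
  intro α β
  have e1 : B ((∑ i ∈ t, f i) α) β = ∑ i ∈ t, B (f i α) β := by
    rw [LinearMap.sum_apply, map_sum, LinearMap.sum_apply]
  have e2 : B α ((∑ i ∈ t, g i) β) = ∑ i ∈ t, B α (g i β) := by
    rw [LinearMap.sum_apply, map_sum]
  rw [e1, e2]
  exact Finset.sum_congr rfl fun i hi => h i hi α β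

lemma isAdj_of_mono {T T' : Module.End ℝ (Wns n s)}
    (h : ∀ P Q, B (T (mono n s P)) (mono n s Q) = B (mono n s P) (T' (mono n s Q))) :
    IsAdj B T T' := by
  have hfg : B ∘ₗ T = B.compl₂ T' := by
    apply LinearMap.ext_on span_mono_top
    rintro _ ⟨P, rfl⟩
    apply LinearMap.ext_on span_mono_top
    rintro _ ⟨Q, rfl⟩
    simpa using h P Q
  intro α β
  have := DFunLike.congr_fun (DFunLike.congr_fun hfg α) β
  simpa using this

lemma isAdj_aop_cop
    (hBortho : ∀ P Q : Finset (Idx n s),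
      B (mono n s P) (mono n s Q) = if P = Q then 1 else 0)
    (p : Idx n s) : IsAdj B (aop n s p) (cop n s p) := by
  refine isAdj_of_mono fun P Q => ?_
  rw [aop_mono, cop_mono]
  by_cases hP : p ∈ P
  · rw [if_pos hP, map_zero, LinearMap.zero_apply]
    by_cases hQ : p ∈ Q
    · rw [if_pos hQ, map_smul, smul_eq_mul, hBortho, if_neg (fun h : P = Q.erase p => Finset.notMem_erase p Q (h ▸ hP)), mul_zero]
    · rw [if_neg hQ, map_zero]
  · rw [if_neg hP]
    by_cases hQ : p ∈ Q
    · rw [if_pos hQ, map_smul, LinearMap.smul_apply, map_smul, smul_eq_mul, smul_eq_mul,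
        hBortho, hBortho]
      by_cases hPQ : insert p P = Q
      · have hPQ' : P = Q.erase p := by
          rw [← hPQ, Finset.erase_insert hP]
        rw [if_pos hPQ, if_pos hPQ', mul_one, mul_one]
        congr 2
        rw [← hPQ, Finset.filter_insert, if_neg (lt_irrefl _)]
      · have hPQ' : P ≠ Q.erase p := fun h => hPQ (by rw [h, Finset.insert_erase hQ])
        rw [if_neg hPQ, if_neg hPQ', mul_zero, mul_zero]
    · rw [if_neg hQ, map_zero, map_smul, LinearMap.smul_apply, smul_eq_mul, hBortho,
        if_neg (fun h : insert p P = Q => hQ (h ▸ Finset.mem_insert_self p P)), mul_zero]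

end Adjoint

section Car

variable {n s : ℕ}

lemma ca_swap_assoc {p u : Idx n s} (h : p ≠ u) (x : Module.End ℝ (Wns n s)) :
    cop n s u * (aop n s p * x) = -(aop n s p * (cop n s u * x)) := by
  rw [← mul_assoc, ca_swap h, neg_mul, mul_assoc]

lemma cc_through {p q v : Idx n s} (h1 : p ≠ v) (h2 : q ≠ v) :
    cop n s v * (aop n s p * aop n s q) = (aop n s p * aop n s q) * cop n s v := by
  rw [ca_swap_assoc h1, ca_swap h2, mul_neg, neg_neg, ← mul_assoc]

lemma aa_through (t v w : Idx n s) :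
    aop n s t * (aop n s v * aop n s w) = (aop n s v * aop n s w) * aop n s t := by
  rw [← mul_assoc, aa_swap t v, neg_mul, mul_assoc, aa_swap t w, mul_neg, neg_neg, ← mul_assoc]

lemma quad_ne {p q u v : Idx n s} (hpu : p ≠ u) (hpv : p ≠ v) (hqu : q ≠ u) (hqv : q ≠ v) :
    (cop n s u * cop n s v) * (aop n s p * aop n s q)
      = (aop n s p * aop n s q) * (cop n s u * cop n s v) := by
  rw [mul_assoc, cc_through hpv hqv, ← mul_assoc, ← mul_assoc]
  rw [mul_assoc (cop n s u), show cop n s u * (aop n s p * aop n s q)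
      = (aop n s p * aop n s q) * cop n s u from cc_through hpu hqu]
  noncomm_ring

lemma quad_eq {p q : Idx n s} (h : p ≠ q) :
    (aop n s p * aop n s q) * (cop n s q * cop n s p)
        - (cop n s q * cop n s p) * (aop n s p * aop n s q)
      = aop n s p * cop n s p + aop n s q * cop n s q - 1 := by
  have key : cop n s q * cop n s p * (aop n s p * aop n s q)
      = 1 - aop n s q * cop n s q - aop n s p * cop n s p
        + aop n s p * aop n s q * (cop n s q * cop n s p) := by
    calc cop n s q * cop n s p * (aop n s p * aop n s q)
        = cop n s q * ((cop n s p * aop n s p) * aop n s q) := by noncomm_ring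
      _ = cop n s q * ((1 - aop n s p * cop n s p) * aop n s q) := by rw [ca_self]
      _ = cop n s q * aop n s q - (cop n s q * aop n s p) * (cop n s p * aop n s q) := by
          noncomm_ring
      _ = (1 - aop n s q * cop n s q)
            - (-(aop n s p * cop n s q)) * (-(aop n s q * cop n s p)) := by
          rw [ca_self, ca_swap h, ca_swap (Ne.symm h)]
      _ = 1 - aop n s q * cop n s q - aop n s p * ((cop n s q * aop n s q) * cop n s p) := by
          noncomm_ring
      _ = 1 - aop n s q * cop n s q - aop n s p * ((1 - aop n s q * cop n s q) * cop n s p) := by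
          rw [ca_self]
      _ = 1 - aop n s q * cop n s q - aop n s p * cop n s p
            + aop n s p * aop n s q * (cop n s q * cop n s p) := by noncomm_ring
  rw [key]
  noncomm_ring

lemma N_comm_ne {t v w : Idx n s} (hv : v ≠ t) (hw : w ≠ t) :
    (aop n s t * cop n s t) * (aop n s v * aop n s w)
      = (aop n s v * aop n s w) * (aop n s t * cop n s t) := by
  rw [mul_assoc, cc_through hv hw, ← mul_assoc, ← mul_assoc,
    mul_assoc (aop n s t) (aop n s v) (aop n s w), aa_through, mul_assoc]

lemma N_comm_eq {t w : Idx n s} (hw : w ≠ t) :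
    (aop n s t * cop n s t) * (aop n s t * aop n s w)
        - (aop n s t * aop n s w) * (aop n s t * cop n s t)
      = aop n s t * aop n s w := by
  have e1 : (aop n s t * cop n s t) * (aop n s t * aop n s w) = aop n s t * aop n s w := by
    calc (aop n s t * cop n s t) * (aop n s t * aop n s w)
        = aop n s t * ((cop n s t * aop n s t) * aop n s w) := by noncomm_ring
      _ = aop n s t * ((1 - aop n s t * cop n s t) * aop n s w) := by rw [ca_self]
      _ = aop n s t * aop n s w
            - (aop n s t * aop n s t) * (cop n s t * aop n s w) := by noncomm_ring
      _ = aop n s t * aop n s w := by rw [aa_self, zero_mul, sub_zero]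
  have e2 : (aop n s t * aop n s w) * (aop n s t * cop n s t) = 0 := by
    calc (aop n s t * aop n s w) * (aop n s t * cop n s t)
        = aop n s t * ((aop n s w * aop n s t) * cop n s t) := by noncomm_ring
      _ = aop n s t * ((-(aop n s t * aop n s w)) * cop n s t) := by rw [aa_swap]
      _ = -((aop n s t * aop n s t) * (aop n s w * cop n s t)) := by noncomm_ring
      _ = 0 := by rw [aa_self, zero_mul, neg_zero]
  rw [e1, e2, sub_zero]

lemma Hstd_eq (k : Fin s) :
    Lstd n s k * Λstd n s k - Λstd n s k * Lstd n s k
      = ∑ i : Fin n, (aop n s (Sum.inl i) * cop n s (Sum.inl i)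
          + aop n s (Sum.inr (i, k)) * cop n s (Sum.inr (i, k)) - 1) := by
  rw [Lstd, Λstd, Finset.sum_mul_sum, Finset.sum_mul_sum]
  rw [Finset.sum_comm (s := Finset.univ) (t := Finset.univ)]
  rw [← Finset.sum_sub_distrib]
  simp only [← Finset.sum_sub_distrib]
  refine Finset.sum_congr rfl fun i _ => ?_
  have key : ∀ x : Fin n,
      (aop n s (Sum.inl x) * aop n s (Sum.inr (x, k)))
          * (cop n s (Sum.inr (i, k)) * cop n s (Sum.inl i))
        - (cop n s (Sum.inr (i, k)) * cop n s (Sum.inl i))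
          * (aop n s (Sum.inl x) * aop n s (Sum.inr (x, k)))
      = if x = i then (aop n s (Sum.inl i) * cop n s (Sum.inl i)
          + aop n s (Sum.inr (i, k)) * cop n s (Sum.inr (i, k)) - 1) else 0 := by
    intro x
    by_cases hxi : x = i
    · subst hxi
      rw [if_pos rfl]
      exact quad_eq (by simp)
    · rw [if_neg hxi, quad_ne (by simp) (by simpa using hxi) (by simpa using hxi)
        (by simp), sub_self]
  rw [Finset.sum_congr rfl fun x _ => key x]
  simp

lemma main1 {k h : Fin s} (hkh : k ≠ h) :
    (Lstd n s k * Λstd n s k - Λstd n s k * Lstd n s k) * Lstd n s h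
        - Lstd n s h * (Lstd n s k * Λstd n s k - Λstd n s k * Lstd n s k)
      = Lstd n s h := by
  rw [Hstd_eq]
  rw [Lstd, Finset.sum_mul_sum, Finset.sum_mul_sum]
  rw [Finset.sum_comm (s := Finset.univ) (t := Finset.univ) (f := fun j i =>
    (aop n s (Sum.inl j) * aop n s (Sum.inr (j, h)))
      * (aop n s (Sum.inl i) * cop n s (Sum.inl i)
          + aop n s (Sum.inr (i, k)) * cop n s (Sum.inr (i, k)) - 1))]
  rw [← Finset.sum_sub_distrib]
  simp only [← Finset.sum_sub_distrib]
  have key : ∀ i j : Fin n,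
      (aop n s (Sum.inl i) * cop n s (Sum.inl i)
          + aop n s (Sum.inr (i, k)) * cop n s (Sum.inr (i, k)) - 1)
          * (aop n s (Sum.inl j) * aop n s (Sum.inr (j, h)))
        - (aop n s (Sum.inl j) * aop n s (Sum.inr (j, h)))
          * (aop n s (Sum.inl i) * cop n s (Sum.inl i)
              + aop n s (Sum.inr (i, k)) * cop n s (Sum.inr (i, k)) - 1)
      = if i = j then aop n s (Sum.inl j) * aop n s (Sum.inr (j, h)) else 0 := by
    intro i j
    have hring : ∀ x y m : Module.End ℝ (Wns n s),
        (x + y - 1) * m - m * (x + y - 1) = (x * m - m * x) + (y * m - m * y) := by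
      intros; noncomm_ring
    rw [hring]
    have h2 : aop n s (Sum.inr (i, k)) * cop n s (Sum.inr (i, k))
          * (aop n s (Sum.inl j) * aop n s (Sum.inr (j, h)))
        - (aop n s (Sum.inl j) * aop n s (Sum.inr (j, h)))
          * (aop n s (Sum.inr (i, k)) * cop n s (Sum.inr (i, k))) = 0 := by
      rw [N_comm_ne (by simp) (by simp [Ne.symm hkh]), sub_self]
    by_cases hij : i = j
    · subst hij
      rw [if_pos rfl, h2, add_zero, N_comm_eq (by simp)]
    · rw [if_neg hij, h2, add_zero,
        N_comm_ne (by simp [Ne.symm hij]) (by simp), sub_self]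
  rw [Finset.sum_congr rfl fun i (_ : i ∈ Finset.univ) =>
    Finset.sum_congr rfl fun j (_ : j ∈ Finset.univ) => key i j]
  simp [Lstd]

end Car

section MoreAdjoint

variable {n s : ℕ} {B : Wns n s →ₗ[ℝ] Wns n s →ₗ[ℝ] ℝ}

lemma isAdj_sub {T T' S S' : Module.End ℝ (Wns n s)}
    (hT : IsAdj B T T') (hS : IsAdj B S S') : IsAdj B (T - S) (T' - S') := by
  intro α β
  have e1 : B ((T - S) α) β = B (T α) β - B (S α) β := by
    rw [LinearMap.sub_apply, map_sub, LinearMap.sub_apply]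
  have e2 : B α ((T' - S') β) = B α (T' β) - B α (S' β) := by
    rw [LinearMap.sub_apply, map_sub]
  rw [e1, e2, hT, hS]

lemma isAdj_neg {T T' : Module.End ℝ (Wns n s)}
    (hT : IsAdj B T T') : IsAdj B (-T) (-T') := by
  intro α β
  have e1 : B ((-T) α) β = -(B (T α) β) := by
    rw [LinearMap.neg_apply, map_neg, LinearMap.neg_apply]
  have e2 : B α ((-T') β) = -(B α (T' β)) := by
    rw [LinearMap.neg_apply, map_neg]
  rw [e1, e2, hT]

end MoreAdjoint

end Stmt9Aux

open Stmt9Aux in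
theorem stmt9 (n s : ℕ)
    (B : Wns n s →ₗ[ℝ] Wns n s →ₗ[ℝ] ℝ)
    (hBsymm : ∀ α β, B α β = B β α)
    (hBortho : ∀ P Q : Finset (Idx n s),
      B (mono n s P) (mono n s Q) = if P = Q then 1 else 0)
    (Λ : Fin s → (Wns n s →ₗ[ℝ] Wns n s))
    (hΛ : ∀ (k : Fin s) (α β : Wns n s), B (Lop n s k α) β = B α (Λ k β)) :
    ∀ k h : Fin s, k ≠ h →
      lcomm (lcomm (Lop n s k) (Λ k)) (Lop n s h) = Lop n s h
      ∧ lcomm (lcomm (Lop n s k) (Λ k)) (Λ h) = -(Λ h) := by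
  intro k h hkh
  have hmul : ∀ (A C : Module.End ℝ (Wns n s)), lcomm A C = A * C - C * A := fun A C => by
    rw [lcomm, Module.End.mul_eq_comp, Module.End.mul_eq_comp]
  have hadj : ∀ m : Fin s, IsAdj B (Lop n s m) (Λ m) := fun m α β => hΛ m α β
  have hstd : ∀ m : Fin s, IsAdj B (Lop n s m) (Λstd n s m) := by
    intro m
    rw [Lop_eq, Lstd, Λstd]
    exact isAdj_sum _ _ _ fun i _ =>
      isAdj_mul (isAdj_aop_cop hBortho _) (isAdj_aop_cop hBortho _)
  have hΛeq : ∀ m, Λ m = Λstd n s m := fun m => isAdj_unique_right hBortho (hadj m) (hstd m)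
  have goal1 : lcomm (lcomm (Lop n s k) (Λ k)) (Lop n s h) = Lop n s h := by
    rw [hmul, hmul, hΛeq, Lop_eq, Lop_eq]
    exact main1 hkh
  refine ⟨goal1, ?_⟩
  have hΛLadj : ∀ m, IsAdj B (Λ m) (Lop n s m) := by
    intro m α β
    rw [hBsymm, ← hΛ m β α, hBsymm]
  have hHadj : IsAdj B (lcomm (Lop n s k) (Λ k)) (lcomm (Lop n s k) (Λ k)) := by
    rw [hmul]
    exact isAdj_sub (isAdj_mul (hadj k) (hΛLadj k)) (isAdj_mul (hΛLadj k) (hadj k))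
  have hflip : Lop n s h * lcomm (Lop n s k) (Λ k)
      - lcomm (Lop n s k) (Λ k) * Lop n s h = -(Lop n s h) := by
    have g1 := goal1
    rw [hmul (lcomm (Lop n s k) (Λ k)) (Lop n s h)] at g1
    rw [← neg_sub (lcomm (Lop n s k) (Λ k) * Lop n s h)
      (Lop n s h * lcomm (Lop n s k) (Λ k)), g1]
  have h1 : IsAdj B (lcomm (lcomm (Lop n s k) (Λ k)) (Λ h)) (-(Lop n s h)) := by
    rw [hmul, ← hflip]
    exact isAdj_sub (isAdj_mul hHadj (hΛLadj h)) (isAdj_mul (hΛLadj h) hHadj)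
  have h2 : IsAdj B (-(Λ h)) (-(Lop n s h)) := isAdj_neg (hΛLadj h)
  exact isAdj_unique_left hBsymm hBortho h1 h2
end
end

section
/- In the setting of the flat Lefschetz operators on $\bigwedge^*(\mathbb{R}^{n(s+1)})^*$, for distinct indices $k \ne h$ one has $[[L_k,\Lambda_h], L_h] = L_k$ and $[[L_k,\Lambda_h],\Lambda_k] = -\Lambda_h$, while for pairwise distinct $h,k,l$ one has $[[L_k,\Lambda_h], L_l] = 0$. -/
/-!
STATEMENT 10: For the flat Lefschetz operators, for `k ≠ h` one has
`[[L_k, Λ_h], L_h] = L_k` and `[[L_k, Λ_h], Λ_k] = -Λ_h`, and for pairwise distinct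
`h, k, l` one has `[[L_k, Λ_h], L_l] = 0`.
-/

noncomputable section

/-! ### Auxiliary development -/

namespace Stmt10Aux

section RingAux

variable {A : Type*} [Ring A]

lemma swap3 {x y : A} (h : x * y = -(y * x)) (z : A) : x * (y * z) = -(y * (x * z)) := by
  rw [← mul_assoc, h, neg_mul, mul_assoc]

lemma delta3 {x y : A} (h : x * y = 1 - y * x) (z : A) : x * (y * z) = z - y * (x * z) := by
  rw [← mul_assoc, h, sub_mul, one_mul, mul_assoc]

lemma neg_swap_symm {x y : A} (h : x * y = -(y * x)) : y * x = -(x * y) := by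
  rw [h, neg_neg]

lemma comm_two {u x y : A} (h1 : u * x = -(x * u)) (h2 : u * y = -(y * u)) :
    u * (x * y) = (x * y) * u := by
  rw [swap3 h1, h2, mul_neg, neg_neg, ← mul_assoc]

lemma comm_pair {u v P : A} (hu : u * P = P * u) (hv : v * P = P * v) :
    (u * v) * P = P * (u * v) := by
  rw [mul_assoc, hv, ← mul_assoc, hu, mul_assoc]

lemma comm_mixed_zero {u v x y : A} (hux : u * x = -(x * u)) (huy : u * y = -(y * u))
    (hvx : v * x = -(x * v)) (hvy : v * y = -(y * v)) :
    (u * v) * (x * y) - (x * y) * (u * v) = 0 := by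
  rw [comm_pair (comm_two hux huy) (comm_two hvx hvy), sub_self]

lemma car_comm_AB {aX aY bH bX : A}
    (hXX : bX * aX = 1 - aX * bX)
    (hHX : bH * aX = -(aX * bH))
    (hXY : bX * aY = -(aY * bX))
    (hHY : bH * aY = -(aY * bH)) :
    (aX * aY) * (bH * bX) - (bH * bX) * (aX * aY) = aY * bH := by
  have e1 : (bH * bX) * (aX * aY) = -(aY * bH) + aX * (aY * (bH * bX)) := by
    calc (bH * bX) * (aX * aY) = bH * (bX * (aX * aY)) := by rw [mul_assoc]
      _ = bH * (aY - aX * (bX * aY)) := by rw [delta3 hXX]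
      _ = bH * (aY + aX * (aY * bX)) := by rw [hXY, mul_neg, sub_neg_eq_add]
      _ = bH * aY + bH * (aX * (aY * bX)) := by rw [mul_add]
      _ = -(aY * bH) + -(aX * (bH * (aY * bX))) := by rw [hHY, swap3 hHX]
      _ = -(aY * bH) + aX * (aY * (bH * bX)) := by rw [swap3 hHY, mul_neg, neg_neg]
  rw [e1, mul_assoc aX aY]
  abel

lemma car_comm_TA {aK bH aX aH : A}
    (hHX : bH * aX = -(aX * bH))
    (hHH : bH * aH = 1 - aH * bH)
    (hKX : aK * aX = -(aX * aK))
    (hKH : aK * aH = -(aH * aK)) :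
    (aK * bH) * (aX * aH) - (aX * aH) * (aK * bH) = aX * aK := by
  have e1 : (aK * bH) * (aX * aH) = aX * (aH * (aK * bH)) + aX * aK := by
    calc (aK * bH) * (aX * aH) = aK * (bH * (aX * aH)) := by rw [mul_assoc]
      _ = aK * (-(aX * (bH * aH))) := by rw [swap3 hHX]
      _ = aK * (aX * (aH * bH) - aX) := by
          rw [hHH, mul_sub, mul_one, neg_sub]
      _ = aK * (aX * (aH * bH)) - aK * aX := by rw [mul_sub]
      _ = -(aX * (aK * (aH * bH))) - -(aX * aK) := by rw [swap3 hKX, hKX]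
      _ = -(aX * (-(aH * (aK * bH)))) + aX * aK := by rw [swap3 hKH, sub_neg_eq_add]
      _ = aX * (aH * (aK * bH)) + aX * aK := by rw [mul_neg, neg_neg]
  rw [e1, mul_assoc aX aH]
  abel

lemma car_comm_TB {aK bH bK bX : A}
    (hKK : bK * aK = 1 - aK * bK)
    (hXK : bX * aK = -(aK * bX))
    (hHK : bH * bK = -(bK * bH))
    (hHXb : bH * bX = -(bX * bH)) :
    (aK * bH) * (bK * bX) - (bK * bX) * (aK * bH) = -(bH * bX) := by
  have e1 : (bK * bX) * (aK * bH) = aK * (bK * (bX * bH)) - bX * bH := by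
    calc (bK * bX) * (aK * bH) = bK * (bX * (aK * bH)) := by rw [mul_assoc]
      _ = bK * (-(aK * (bX * bH))) := by rw [swap3 hXK]
      _ = -(bK * (aK * (bX * bH))) := by rw [mul_neg]
      _ = -((bX * bH) - aK * (bK * (bX * bH))) := by rw [delta3 hKK]
      _ = aK * (bK * (bX * bH)) - bX * bH := by rw [neg_sub]
  have e2 : (aK * bH) * (bK * bX) = aK * (bK * (bX * bH)) := by
    calc (aK * bH) * (bK * bX) = aK * (bH * (bK * bX)) := by rw [mul_assoc]
      _ = aK * ((bK * bX) * bH) := by rw [comm_two hHK hHXb]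
      _ = aK * (bK * (bX * bH)) := by rw [mul_assoc]
  rw [e1, e2, hHXb]
  abel

lemma sum_commutator {m : ℕ} (f g c : Fin m → A)
    (h : ∀ i j, f i * g j - g j * f i = if i = j then c i else 0) :
    (∑ i, f i) * (∑ j, g j) - (∑ j, g j) * (∑ i, f i) = ∑ i, c i := by
  rw [Finset.sum_mul_sum, Finset.sum_mul_sum]
  rw [Finset.sum_comm (s := (Finset.univ : Finset (Fin m)))
    (t := (Finset.univ : Finset (Fin m))) (f := fun j i => g j * f i)]
  rw [← Finset.sum_sub_distrib]
  simp_rw [← Finset.sum_sub_distrib, h]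
  simp

end RingAux

variable {n s : ℕ}

/-- The reindexed basis of `Vns n s` over `Fin (n + n*s)`. -/
def eb (n s : ℕ) : Module.Basis (Fin (n + n * s)) ℝ (Vns n s) := (bV n s).reindex (idxEquiv n s)

/-- Generator of the exterior algebra. -/
def ee (n s : ℕ) (t : Fin (n + n * s)) : Wns n s := ExteriorAlgebra.ι ℝ (eb n s t)

def prodL (n s : ℕ) (l : List (Fin (n + n * s))) : Wns n s := (l.map (ee n s)).prod

def MS (n s : ℕ) (S : Finset (Fin (n + n * s))) : Wns n s := prodL n s (S.sort (· ≤ ·))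

lemma eb_apply (t : Fin (n + n * s)) : eb n s t = bV n s ((idxEquiv n s).symm t) :=
  Module.Basis.reindex_apply _ _ _

lemma prodL_nil : prodL n s [] = 1 := rfl

lemma prodL_cons (a : Fin (n + n * s)) (l : List (Fin (n + n * s))) :
    prodL n s (a :: l) = ee n s a * prodL n s l := by
  simp [prodL]

lemma mono_eq_MS (S : Finset (Fin (n + n * s))) :
    mono n s (S.image (idxEquiv n s).symm) = MS n s S := by
  have h1 : (S.image (idxEquiv n s).symm).image (idxEquiv n s) = S := by
    rw [Finset.image_image]
    simp
  rw [mono, MS, prodL, h1]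
  have h2 : (fun t => ExteriorAlgebra.ι ℝ (bV n s ((idxEquiv n s).symm t))) = ee n s := by
    funext t
    rw [ee, eb_apply]
  rw [h2]

lemma ee_swap (t u : Fin (n + n * s)) : ee n s t * ee n s u = -(ee n s u * ee n s t) := by
  rw [eq_neg_iff_add_eq_zero]
  exact ExteriorAlgebra.ι_add_mul_swap _ _

lemma ee_sq (t : Fin (n + n * s)) : ee n s t * ee n s t = 0 :=
  ExteriorAlgebra.ι_sq_zero _

lemma ee_mul_prodL_of_mem {l : List (Fin (n + n * s))} {i : Fin (n + n * s)} (h : i ∈ l) :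
    ee n s i * prodL n s l = 0 := by
  induction l with
  | nil => simp at h
  | cons a t ih =>
    rw [prodL_cons]
    rcases List.mem_cons.mp h with rfl | h'
    · rw [← mul_assoc, ee_sq, zero_mul]
    · rw [← mul_assoc, ee_swap, neg_mul, mul_assoc, ih h', mul_zero, neg_zero]

lemma ee_mul_prodL_sorted {l : List (Fin (n + n * s))} (hs : l.Pairwise (· ≤ ·))
    {i : Fin (n + n * s)} (hi : i ∉ l) :
    ee n s i * prodL n s l
      = ((-1 : ℝ) ^ (l.filter (fun j => decide (j < i))).length) •
          prodL n s (l.orderedInsert (· ≤ ·) i) := by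
  induction l with
  | nil => simp [prodL_nil, prodL_cons, List.orderedInsert]
  | cons a t ih =>
    have ha := (List.pairwise_cons.mp hs).1
    have hst := (List.pairwise_cons.mp hs).2
    have hia : i ≠ a := fun hh => hi (hh ▸ List.mem_cons_self (a := a) (l := t))
    have hit : i ∉ t := fun hh => hi (List.mem_cons_of_mem a hh)
    by_cases hle : i ≤ a
    · have hfil : (List.filter (fun j => decide (j < i)) (a :: t)).length = 0 := by
        rw [List.length_eq_zero_iff, List.filter_eq_nil_iff]
        intro j hj
        simp only [decide_eq_true_eq, not_lt]
        rcases List.mem_cons.mp hj with rfl | hj'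
        · exact hle
        · exact hle.trans (ha j hj')
      rw [hfil, pow_zero, one_smul, List.orderedInsert_cons_of_le _ _ hle]
      simp only [prodL_cons]
    · have halt : a < i := lt_of_not_ge hle
      have hfil : (List.filter (fun j => decide (j < i)) (a :: t))
          = a :: List.filter (fun j => decide (j < i)) t := by
        rw [List.filter_cons_of_pos]
        simp [halt]
      have hoi : (a :: t).orderedInsert (· ≤ ·) i = a :: t.orderedInsert (· ≤ ·) i := by
        simp [List.orderedInsert, hle]
      rw [hoi, hfil, List.length_cons]
      rw [prodL_cons, prodL_cons, swap3 (ee_swap i a), ih hst hit, mul_smul_comm,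
        ← neg_smul, pow_succ, mul_neg_one, neg_smul]

lemma prodL_mul_ee (l : List (Fin (n + n * s))) (t : Fin (n + n * s)) :
    prodL n s l * ee n s t = ((-1 : ℝ) ^ l.length) • (ee n s t * prodL n s l) := by
  induction l with
  | nil => simp [prodL_nil]
  | cons a u ih =>
    simp only [prodL_cons, List.length_cons]
    rw [mul_assoc, ih, mul_smul_comm, swap3 (ee_swap a t), smul_neg,
      pow_succ, mul_neg_one, neg_smul]

lemma sort_insert_eq {S : Finset (Fin (n + n * s))} {i : Fin (n + n * s)} (hi : i ∉ S) :
    (insert i S).sort (· ≤ ·) = (S.sort (· ≤ ·)).orderedInsert (· ≤ ·) i := by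
  refine List.Perm.eq_of_pairwise' (Finset.pairwise_sort _ _)
    (List.Pairwise.orderedInsert i _ (Finset.pairwise_sort _ _)) ?_
  exact ((Finset.sort_perm_toList _ _).trans
    ((Finset.toList_insert hi).trans
      ((List.Perm.cons i (Finset.sort_perm_toList _ _).symm).trans
        (List.perm_orderedInsert _ i _).symm)))

/-- The sign exponent. -/
def csg (S : Finset (Fin (n + n * s))) (i : Fin (n + n * s)) : ℕ :=
  ((S.sort (· ≤ ·)).filter (fun j => decide (j < i))).length

lemma ee_mul_MS_not_mem {S : Finset (Fin (n + n * s))} {i : Fin (n + n * s)} (hi : i ∉ S) :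
    ee n s i * MS n s S = ((-1 : ℝ) ^ csg S i) • MS n s (insert i S) := by
  rw [MS, ee_mul_prodL_sorted (Finset.pairwise_sort _ _) (by simpa using hi), MS,
    sort_insert_eq hi, csg]

lemma ee_mul_MS_mem {S : Finset (Fin (n + n * s))} {i : Fin (n + n * s)} (hi : i ∈ S) :
    ee n s i * MS n s S = 0 :=
  ee_mul_prodL_of_mem (by simpa using hi)

/-! ### Operators -/

def aOp (n s : ℕ) (t : Fin (n + n * s)) : Module.End ℝ (Wns n s) :=
  LinearMap.mulLeft ℝ (ee n s t)

def bOp (n s : ℕ) (t : Fin (n + n * s)) : Module.End ℝ (Wns n s) :=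
  CliffordAlgebra.contractLeft ((eb n s).coord t)

lemma aOp_apply (t : Fin (n + n * s)) (x : Wns n s) : aOp n s t x = ee n s t * x := rfl

lemma coord_ee (t u : Fin (n + n * s)) :
    (eb n s).coord t (eb n s u) = if u = t then 1 else 0 := by
  rw [Module.Basis.coord_apply, Module.Basis.repr_self_apply]

lemma bOp_one (t : Fin (n + n * s)) : bOp n s t 1 = 0 :=
  CliffordAlgebra.contractLeft_one _ _

lemma bOp_ee_mul (t u : Fin (n + n * s)) (x : Wns n s) :
    bOp n s t (ee n s u * x)
      = ((eb n s).coord t (eb n s u)) • x - ee n s u * bOp n s t x :=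
  CliffordAlgebra.contractLeft_ι_mul _ _ _

lemma bOp_prodL_not_mem {l : List (Fin (n + n * s))} {t : Fin (n + n * s)} (ht : t ∉ l) :
    bOp n s t (prodL n s l) = 0 := by
  induction l with
  | nil => exact bOp_one t
  | cons a u ih =>
    have hta : a ≠ t := fun hh => ht (hh ▸ List.mem_cons_self (a := a) (l := u))
    have htu : t ∉ u := fun hh => ht (List.mem_cons_of_mem a hh)
    rw [prodL_cons, bOp_ee_mul, coord_ee, if_neg hta, zero_smul, zero_sub, ih htu,
      mul_zero, neg_zero]

lemma bOp_prodL_orderedInsert {l : List (Fin (n + n * s))} (hs : l.Pairwise (· ≤ ·))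
    {i : Fin (n + n * s)} (hi : i ∉ l) :
    bOp n s i (prodL n s (l.orderedInsert (· ≤ ·) i))
      = ((-1 : ℝ) ^ (l.filter (fun j => decide (j < i))).length) • prodL n s l := by
  induction l with
  | nil =>
    simp only [List.orderedInsert, prodL_cons, prodL_nil, List.filter_nil, List.length_nil,
      pow_zero, one_smul]
    rw [bOp_ee_mul, coord_ee, if_pos rfl, one_smul, bOp_one, mul_zero, sub_zero]
  | cons a t ih =>
    have ha := (List.pairwise_cons.mp hs).1
    have hst := (List.pairwise_cons.mp hs).2
    have hia : i ≠ a := fun hh => hi (hh ▸ List.mem_cons_self (a := a) (l := t))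
    have hit : i ∉ t := fun hh => hi (List.mem_cons_of_mem a hh)
    by_cases hle : i ≤ a
    · have hfil : (List.filter (fun j => decide (j < i)) (a :: t)).length = 0 := by
        rw [List.length_eq_zero_iff, List.filter_eq_nil_iff]
        intro j hj
        simp only [decide_eq_true_eq, not_lt]
        rcases List.mem_cons.mp hj with rfl | hj'
        · exact hle
        · exact hle.trans (ha j hj')
      rw [List.orderedInsert_cons_of_le _ _ hle, hfil, pow_zero, one_smul, prodL_cons,
        bOp_ee_mul, coord_ee, if_pos rfl, one_smul, bOp_prodL_not_mem (by simpa using hi),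
        mul_zero, sub_zero]
    · have halt : a < i := lt_of_not_ge hle
      have hfil : (List.filter (fun j => decide (j < i)) (a :: t))
          = a :: List.filter (fun j => decide (j < i)) t := by
        rw [List.filter_cons_of_pos]
        simp [halt]
      have hoi : (a :: t).orderedInsert (· ≤ ·) i = a :: t.orderedInsert (· ≤ ·) i := by
        simp [List.orderedInsert, hle]
      rw [hoi, prodL_cons, bOp_ee_mul, coord_ee, if_neg hia.symm, zero_smul, zero_sub,
        ih hst hit, hfil, List.length_cons, pow_succ, prodL_cons,
        mul_smul_comm, ← neg_smul, mul_neg_one, neg_smul]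

lemma bOp_MS_not_mem {S : Finset (Fin (n + n * s))} {i : Fin (n + n * s)} (hi : i ∉ S) :
    bOp n s i (MS n s S) = 0 :=
  bOp_prodL_not_mem (by simpa using hi)

lemma bOp_MS_insert {S : Finset (Fin (n + n * s))} {i : Fin (n + n * s)} (hi : i ∉ S) :
    bOp n s i (MS n s (insert i S)) = ((-1 : ℝ) ^ csg S i) • MS n s S := by
  rw [MS, sort_insert_eq hi, bOp_prodL_orderedInsert (Finset.pairwise_sort _ _)
    (by simpa using hi), csg, MS]

/-! ### Spanning -/

lemma MS_empty : MS n s ∅ = 1 := by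
  simp [MS, prodL]

lemma span_MS : Submodule.span ℝ (Set.range (MS n s)) = ⊤ := by
  set W := Submodule.span ℝ (Set.range (MS n s)) with hW
  have hmem : ∀ S, MS n s S ∈ W := fun S => Submodule.subset_span ⟨S, rfl⟩
  have hee : ∀ t S, ee n s t * MS n s S ∈ W := by
    intro t S
    by_cases h : t ∈ S
    · rw [ee_mul_MS_mem h]; exact W.zero_mem
    · rw [ee_mul_MS_not_mem h]; exact W.smul_mem _ (hmem _)
  have hre : ∀ S t, MS n s S * ee n s t ∈ W := by
    intro S t
    rw [MS, prodL_mul_ee]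
    exact W.smul_mem _ (by rw [← MS]; exact hee t S)
  have hιv : ∀ (v : Vns n s) S, MS n s S * ExteriorAlgebra.ι ℝ v ∈ W := by
    intro v S
    have hv : ExteriorAlgebra.ι ℝ v = ∑ t, ((eb n s).repr v t) • ee n s t := by
      conv_lhs => rw [← (eb n s).sum_repr v]
      rw [map_sum]
      simp [ee]
    rw [hv, Finset.mul_sum]
    refine Submodule.sum_mem _ fun t _ => ?_
    rw [mul_smul_comm]
    exact W.smul_mem _ (hre S t)
  have key : ∀ x : Wns n s, ∀ S, MS n s S * x ∈ W := by
    intro x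
    induction x using ExteriorAlgebra.induction with
    | algebraMap r =>
      intro S
      rw [Algebra.algebraMap_eq_smul_one, mul_smul_comm, mul_one]
      exact W.smul_mem _ (hmem S)
    | ι v => exact fun S => hιv v S
    | mul x y hx hy =>
      intro S
      rw [← mul_assoc]
      have hx' := hx S
      refine Submodule.span_induction (p := fun z _ => z * y ∈ W) ?_ ?_ ?_ ?_ hx'
      · rintro z ⟨T, rfl⟩
        exact hy T
      · show (0 : Wns n s) * y ∈ W
        rw [zero_mul]; exact W.zero_mem
      · intro z w _ _ hz hw
        show (z + w) * y ∈ W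
        rw [add_mul]; exact W.add_mem hz hw
      · intro r z _ hz
        show (r • z) * y ∈ W
        rw [smul_mul_assoc]; exact W.smul_mem _ hz
    | add x y hx hy =>
      intro S
      rw [mul_add]
      exact W.add_mem (hx S) (hy S)
  rw [Submodule.eq_top_iff']
  intro x
  have := key x ∅
  rwa [MS_empty, one_mul] at this

/-! ### Orthogonality, nondegeneracy, adjointness -/

section Bil

variable (B : Wns n s →ₗ[ℝ] Wns n s →ₗ[ℝ] ℝ)
  (hBortho : ∀ P Q : Finset (Idx n s),
    B (mono n s P) (mono n s Q) = if P = Q then 1 else 0)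

include hBortho

lemma MS_ortho (S T : Finset (Fin (n + n * s))) :
    B (MS n s S) (MS n s T) = if S = T then 1 else 0 := by
  rw [← mono_eq_MS S, ← mono_eq_MS T, hBortho]
  by_cases hST : S = T
  · rw [if_pos (by rw [hST]), if_pos hST]
  · rw [if_neg, if_neg hST]
    intro hc
    exact hST (Finset.image_injective (Equiv.injective _) hc)

lemma nondeg {γ : Wns n s} (h : ∀ S, B (MS n s S) γ = 0) : γ = 0 := by
  have hγ : γ ∈ Submodule.span ℝ (Set.range (MS n s)) := by rw [span_MS]; trivial
  obtain ⟨c, rfl⟩ := (Submodule.mem_span_range_iff_exists_fun ℝ).mp hγ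
  have hc : ∀ S, c S = 0 := by
    intro S
    have h0 := h S
    rw [map_sum] at h0
    simp_rw [map_smul, MS_ortho B hBortho, smul_eq_mul, mul_ite, mul_one, mul_zero] at h0
    simpa [Finset.sum_ite_eq] using h0
  simp [hc]

lemma adj_gen_mono (t : Fin (n + n * s)) (S T : Finset (Fin (n + n * s))) :
    B (aOp n s t (MS n s S)) (MS n s T) = B (MS n s S) (bOp n s t (MS n s T)) := by
  by_cases htS : t ∈ S
  · rw [aOp_apply, ee_mul_MS_mem htS, map_zero, LinearMap.zero_apply]
    by_cases htT : t ∈ T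
    · have hT : T = insert t (T.erase t) := (Finset.insert_erase htT).symm
      rw [hT, bOp_MS_insert (Finset.notMem_erase t T), map_smul, smul_eq_mul,
        MS_ortho B hBortho, if_neg, mul_zero]
      intro hc
      exact Finset.notMem_erase t T (hc ▸ htS)
    · rw [bOp_MS_not_mem htT, map_zero]
  · rw [aOp_apply, ee_mul_MS_not_mem htS, map_smul, LinearMap.smul_apply, smul_eq_mul,
      MS_ortho B hBortho]
    by_cases htT : t ∈ T
    · have hT : T = insert t (T.erase t) := (Finset.insert_erase htT).symm
      rw [hT, bOp_MS_insert (Finset.notMem_erase t T), map_smul, smul_eq_mul,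
        MS_ortho B hBortho]
      by_cases hST : S = T.erase t
      · rw [hST, if_pos rfl, if_pos rfl]
      · rw [if_neg, if_neg hST, mul_zero, mul_zero]
        intro hc
        apply hST
        have h1 : S = (insert t S).erase t := (Finset.erase_insert htS).symm
        rw [h1, hc, Finset.erase_insert (Finset.notMem_erase t T)]
    · rw [bOp_MS_not_mem htT, map_zero, if_neg, mul_zero]
      intro hc
      exact htT (hc ▸ Finset.mem_insert_self t S)

lemma adj_gen (t : Fin (n + n * s)) (α β : Wns n s) :
    B (aOp n s t α) β = B α (bOp n s t β) := by
  have hmaps : B.comp (aOp n s t) = B.compl₂ (bOp n s t) := by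
    apply LinearMap.ext_on_range (span_MS (n := n) (s := s))
    intro S
    apply LinearMap.ext_on_range (span_MS (n := n) (s := s))
    intro T
    simpa [LinearMap.compl₂_apply] using adj_gen_mono B hBortho t S T
  have h2 := LinearMap.congr_fun (LinearMap.congr_fun hmaps α) β
  simpa [LinearMap.compl₂_apply] using h2

end Bil

/-! ### The operators as sums of creation/annihilation pairs -/

def Xi (n s : ℕ) (i : Fin n) : Fin (n + n * s) := idxEquiv n s (Sum.inl i)

def Yi (n s : ℕ) (k : Fin s) (i : Fin n) : Fin (n + n * s) := idxEquiv n s (Sum.inr (i, k))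

lemma Xi_ne_Yi (i j : Fin n) (k : Fin s) : Xi n s i ≠ Yi n s k j := by
  simp [Xi, Yi, Equiv.apply_eq_iff_eq]

lemma Xi_ne {i j : Fin n} (hij : i ≠ j) : Xi n s i ≠ Xi n s j := by
  simp [Xi, Equiv.apply_eq_iff_eq, hij]

lemma Yi_ne₁ {k h : Fin s} (hkh : k ≠ h) (i j : Fin n) : Yi n s k i ≠ Yi n s h j := by
  simp only [Yi, Equiv.apply_eq_iff_eq, ne_eq, Sum.inr.injEq, Prod.mk.injEq, not_and]
  exact fun _ => hkh

lemma Yi_ne₂ {i j : Fin n} (hij : i ≠ j) (k h : Fin s) : Yi n s k i ≠ Yi n s h j := by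
  simp only [Yi, Equiv.apply_eq_iff_eq, ne_eq, Sum.inr.injEq, Prod.mk.injEq]
  exact fun hc => hij hc.1

lemma aa_swap (t u : Fin (n + n * s)) :
    aOp n s t * aOp n s u = -(aOp n s u * aOp n s t) := by
  apply LinearMap.ext; intro z
  simp only [Module.End.mul_apply, aOp_apply, LinearMap.neg_apply]
  rw [← mul_assoc, ← mul_assoc, ee_swap, neg_mul]

lemma bb_swap (t u : Fin (n + n * s)) :
    bOp n s t * bOp n s u = -(bOp n s u * bOp n s t) := by
  apply LinearMap.ext; intro z
  simp only [Module.End.mul_apply, LinearMap.neg_apply]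
  exact CliffordAlgebra.contractLeft_comm _ _ z

lemma ba_swap {t u : Fin (n + n * s)} (h : t ≠ u) :
    bOp n s t * aOp n s u = -(aOp n s u * bOp n s t) := by
  apply LinearMap.ext; intro z
  simp only [Module.End.mul_apply, aOp_apply, LinearMap.neg_apply]
  rw [bOp_ee_mul, coord_ee, if_neg (Ne.symm h), zero_smul, zero_sub]

lemma ba_same (t : Fin (n + n * s)) :
    bOp n s t * aOp n s t = 1 - aOp n s t * bOp n s t := by
  apply LinearMap.ext; intro z
  simp only [Module.End.mul_apply, aOp_apply, LinearMap.sub_apply, Module.End.one_apply]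
  rw [bOp_ee_mul, coord_ee, if_pos rfl, one_smul]

lemma Lop_eq (k : Fin s) :
    Lop n s k = ∑ i, aOp n s (Xi n s i) * aOp n s (Yi n s k i) := by
  apply LinearMap.ext; intro z
  rw [Lop, LinearMap.mulLeft_apply, Finset.sum_mul, LinearMap.sum_apply]
  refine Finset.sum_congr rfl fun i _ => ?_
  have h1 : ee n s (Xi n s i) = ExteriorAlgebra.ι ℝ (bV n s (Sum.inl i)) := by
    rw [ee, eb_apply, Xi, Equiv.symm_apply_apply]
  have h2 : ee n s (Yi n s k i) = ExteriorAlgebra.ι ℝ (bV n s (Sum.inr (i, k))) := by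
    rw [ee, eb_apply, Yi, Equiv.symm_apply_apply]
  rw [Module.End.mul_apply, aOp_apply, aOp_apply, ← mul_assoc, h1, h2]

/-- The explicit adjoint of `Lop`. -/
def Lam (n s : ℕ) (k : Fin s) : Module.End ℝ (Wns n s) :=
  ∑ i, bOp n s (Yi n s k i) * bOp n s (Xi n s i)

section Bil2

variable (B : Wns n s →ₗ[ℝ] Wns n s →ₗ[ℝ] ℝ)
  (hBortho : ∀ P Q : Finset (Idx n s),
    B (mono n s P) (mono n s Q) = if P = Q then 1 else 0)

include hBortho

lemma adj_Lop (k : Fin s) (α β : Wns n s) :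
    B (Lop n s k α) β = B α (Lam n s k β) := by
  rw [Lop_eq, Lam, LinearMap.sum_apply, map_sum, LinearMap.sum_apply,
    LinearMap.sum_apply, map_sum]
  refine Finset.sum_congr rfl fun i _ => ?_
  rw [Module.End.mul_apply, Module.End.mul_apply, adj_gen B hBortho, adj_gen B hBortho]

lemma Lam_eq (Λ : Fin s → (Wns n s →ₗ[ℝ] Wns n s))
    (hΛ : ∀ (k : Fin s) (α β : Wns n s), B (Lop n s k α) β = B α (Λ k β)) (k : Fin s) :
    Λ k = Lam n s k := by
  apply LinearMap.ext; intro β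
  have hz : ∀ S, B (MS n s S) (Λ k β - Lam n s k β) = 0 := by
    intro S
    rw [map_sub, ← hΛ k (MS n s S) β, adj_Lop B hBortho, sub_self]
  exact sub_eq_zero.mp (nondeg B hBortho hz)

end Bil2

/-! ### The commutator computations -/

lemma lcomm_eq (A C : Module.End ℝ (Wns n s)) : lcomm A C = A * C - C * A := rfl

lemma commLLam {k h : Fin s} (hkh : k ≠ h) :
    lcomm (Lop n s k) (Lam n s h) = ∑ i, aOp n s (Yi n s k i) * bOp n s (Yi n s h i) := by
  rw [lcomm_eq, Lop_eq, Lam]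
  refine sum_commutator _ _ _ fun i j => ?_
  by_cases hij : i = j
  · subst hij
    rw [if_pos rfl]
    exact car_comm_AB (ba_same _) (ba_swap (Xi_ne_Yi i i h).symm)
      (ba_swap (Xi_ne_Yi i i k)) (ba_swap (Yi_ne₁ hkh.symm i i))
  · rw [if_neg hij]
    exact comm_mixed_zero
      (neg_swap_symm (ba_swap (Xi_ne_Yi i j h).symm))
      (neg_swap_symm (ba_swap (Xi_ne (Ne.symm hij))))
      (neg_swap_symm (ba_swap (Yi_ne₁ hkh.symm j i)))
      (neg_swap_symm (ba_swap (Xi_ne_Yi j i k)))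

lemma commTL {k h : Fin s} :
    lcomm (∑ i, aOp n s (Yi n s k i) * bOp n s (Yi n s h i)) (Lop n s h) = Lop n s k := by
  rw [lcomm_eq, Lop_eq h, Lop_eq k]
  refine sum_commutator _ _ _ fun i j => ?_
  by_cases hij : i = j
  · subst hij
    rw [if_pos rfl]
    exact car_comm_TA (ba_swap (Xi_ne_Yi i i h).symm) (ba_same _)
      (aa_swap _ _) (aa_swap _ _)
  · rw [if_neg hij]
    exact comm_mixed_zero (aa_swap _ _) (aa_swap _ _)
      (ba_swap (Xi_ne_Yi j i h).symm)
      (ba_swap (Yi_ne₂ hij h h))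

lemma commTLam {k h : Fin s} :
    lcomm (∑ i, aOp n s (Yi n s k i) * bOp n s (Yi n s h i)) (Lam n s k) = -(Lam n s h) := by
  rw [lcomm_eq, Lam, Lam, ← Finset.sum_neg_distrib]
  refine sum_commutator _ _ _ fun i j => ?_
  by_cases hij : i = j
  · subst hij
    rw [if_pos rfl]
    exact car_comm_TB (ba_same _) (ba_swap (Xi_ne_Yi i i k))
      (bb_swap _ _) (bb_swap _ _)
  · rw [if_neg hij]
    exact comm_mixed_zero
      (neg_swap_symm (ba_swap (Yi_ne₂ (Ne.symm hij) k k)))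
      (neg_swap_symm (ba_swap (Xi_ne_Yi j i k)))
      (bb_swap _ _) (bb_swap _ _)

lemma commTLl {k h l : Fin s} (hhl : h ≠ l) :
    lcomm (∑ i, aOp n s (Yi n s k i) * bOp n s (Yi n s h i)) (Lop n s l) = 0 := by
  rw [lcomm_eq, Lop_eq l]
  have h0 : (∑ i, aOp n s (Yi n s k i) * bOp n s (Yi n s h i)) *
        (∑ j, aOp n s (Xi n s j) * aOp n s (Yi n s l j))
      - (∑ j, aOp n s (Xi n s j) * aOp n s (Yi n s l j)) *
        (∑ i, aOp n s (Yi n s k i) * bOp n s (Yi n s h i))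
      = ∑ _i : Fin n, (0 : Module.End ℝ (Wns n s)) := by
    refine sum_commutator _ _ _ fun i j => ?_
    rw [ite_self]
    exact comm_mixed_zero (aa_swap _ _) (aa_swap _ _)
      (ba_swap (Xi_ne_Yi j i h).symm)
      (ba_swap (Yi_ne₁ hhl i j))
  rw [h0, Finset.sum_const_zero]


end Stmt10Aux

theorem stmt10 (n s : ℕ)
    (B : Wns n s →ₗ[ℝ] Wns n s →ₗ[ℝ] ℝ)
    (hBsymm : ∀ α β, B α β = B β α)
    (hBortho : ∀ P Q : Finset (Idx n s),
      B (mono n s P) (mono n s Q) = if P = Q then 1 else 0)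
    (Λ : Fin s → (Wns n s →ₗ[ℝ] Wns n s))
    (hΛ : ∀ (k : Fin s) (α β : Wns n s), B (Lop n s k α) β = B α (Λ k β)) :
    (∀ k h : Fin s, k ≠ h →
      lcomm (lcomm (Lop n s k) (Λ h)) (Lop n s h) = Lop n s k
      ∧ lcomm (lcomm (Lop n s k) (Λ h)) (Λ k) = -(Λ h)) ∧
    (∀ k h l : Fin s, k ≠ h → h ≠ l → k ≠ l →
      lcomm (lcomm (Lop n s k) (Λ h)) (Lop n s l) = 0) := by
  have hEq : ∀ k, Λ k = Stmt10Aux.Lam n s k :=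
    fun k => Stmt10Aux.Lam_eq B hBortho Λ hΛ k
  refine ⟨fun k h hkh => ⟨?_, ?_⟩, fun k h l hkh hhl hkl => ?_⟩
  · rw [hEq h, Stmt10Aux.commLLam hkh, Stmt10Aux.commTL]
  · rw [hEq h, hEq k, Stmt10Aux.commLLam hkh, Stmt10Aux.commTLam]
  · rw [hEq h, Stmt10Aux.commLLam hkh, Stmt10Aux.commTLl hhl]
end
end
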